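/- arXiv:0709.1642 — 8 statements merged into one kernel-verified Lean document; each statement's English description precedes it below -/
import Mathlib

section
/- Let p, q be coprime integers with 0 < p < q. Define w : ℕ → ℤ by w(i) = ⌈(i+1)p/q⌉ − ⌈i·p/q⌉ for 0 ≤ i ≤ q−2, w(q−1) = 1, and w(i) = 0 for i ≥ q (so (w(0),…,w(q−1)) is the word 1·z_{p,q}·1, padded by zeros). Then for every n with 1 ≤ n ≤ q−1, the shifted sequence (w(n+i))_{i≥0} is lexicographically strictly smaller than (w(i))_{i≥0}; i.e., the word 1 z_{p,q} 1 is lexicographically greater than all of its proper suffixes. -/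
/-- The word `1 z_{p,q} 1` (for coprime `0 < p < q`), padded by zeros:
`w i = ⌈(i+1)p/q⌉ − ⌈ip/q⌉` for `0 ≤ i ≤ q−2`, `w (q−1) = 1`, and `w i = 0` for `i ≥ q`. -/
def oneCentralOne (p q : ℕ) (i : ℕ) : ℤ :=
  if i + 2 ≤ q then ⌈(((i : ℚ) + 1) * p) / q⌉ - ⌈((i : ℚ) * p) / q⌉
  else if i + 1 = q then 1
  else 0

/-- Partial sums of `oneCentralOne`. -/
def ocoF (p q i : ℕ) : ℤ := if q ≤ i then (p : ℤ) + 1 else ⌈((i : ℚ) * p) / q⌉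

lemma ocoF_step (p q : ℕ) (hp : 0 < p) (hpq : p < q) (i : ℕ) :
    oneCentralOne p q i = ocoF p q (i + 1) - ocoF p q i := by
  have hq0 : (0 : ℚ) < q := by exact_mod_cast (by omega : 0 < q)
  by_cases h1 : i + 2 ≤ q
  · have h2 : ¬ q ≤ i + 1 := by omega
    have h3 : ¬ q ≤ i := by omega
    simp only [oneCentralOne, ocoF, if_pos h1, if_neg h2, if_neg h3]
    push_cast
    ring_nf
  · by_cases h4 : i + 1 = q
    · have h5 : q ≤ i + 1 := by omega
      have h6 : ¬ q ≤ i := by omega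
      simp only [oneCentralOne, ocoF, if_neg h1, if_pos h4, if_pos h5, if_neg h6]
      have hi : (i : ℚ) = (q : ℚ) - 1 := by
        have h7 : i = q - 1 := by omega
        rw [h7]
        push_cast [Nat.cast_sub (by omega : 1 ≤ q)]
        ring
      have hceil : ⌈((i : ℚ) * p) / q⌉ = (p : ℤ) := by
        rw [Int.ceil_eq_iff]
        have hp' : (0 : ℚ) < p := by exact_mod_cast hp
        have hpq' : (p : ℚ) < q := by exact_mod_cast hpq
        constructor
        · push_cast
          rw [hi, lt_div_iff₀ hq0]
          nlinarith
        · push_cast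
          rw [hi, div_le_iff₀ hq0]
          nlinarith
      rw [hceil]; ring
    · have h7 : q ≤ i := by omega
      have h8 : q ≤ i + 1 := by omega
      simp only [oneCentralOne, ocoF, if_neg h1, if_neg h4, if_pos h8, if_pos h7]
      ring

/-- For coprime integers `0 < p < q`, the word `1 z_{p,q} 1` is lexicographically
greater than all of its proper suffixes. -/
theorem oneCentralOne_gt_proper_suffixes (p q : ℕ) (hp : 0 < p) (hpq : p < q)
    (hcop : Nat.Coprime p q) :
    ∀ n : ℕ, 1 ≤ n → n ≤ q - 1 →
      ∃ m : ℕ, (∀ i : ℕ, i < m → oneCentralOne p q (n + i) = oneCentralOne p q i) ∧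
        oneCentralOne p q (n + m) < oneCentralOne p q m := by
  intro n hn hnq
  have hq0 : (0 : ℚ) < q := by exact_mod_cast (by omega : 0 < q)
  have hnltq : n < q := by omega
  set x : ℚ := ((n : ℚ) * p) / q with hx
  set c : ℤ := ⌈x⌉ with hc
  have hcpos : 0 < c := by
    apply Int.ceil_pos.mpr
    have hn0 : (0 : ℚ) < (n : ℚ) := by exact_mod_cast hn
    have hp0 : (0 : ℚ) < (p : ℚ) := by exact_mod_cast hp
    rw [hx]; positivity
  -- q does not divide n * p
  have hndvd : ¬ ((q : ℕ) ∣ n * p) := by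
    intro h
    have hq : q ∣ n := (Nat.Coprime.dvd_of_dvd_mul_right (hcop.symm)) h
    have := Nat.le_of_dvd (by omega) hq
    omega
  -- floor of x is < c
  have hfloor : ⌊x⌋ < c := by
    by_contra hcon
    push_neg at hcon
    have hle : x ≤ (⌊x⌋ : ℚ) := le_trans (Int.le_ceil x) (by exact_mod_cast hcon)
    have heq : x = (⌊x⌋ : ℚ) := le_antisymm hle (Int.floor_le x)
    have heq2 : ((n : ℚ) * p) = (⌊x⌋ : ℚ) * q := by
      rw [hx] at heq
      field_simp at heq
      linarith
    have heq3 : ((n * p : ℕ) : ℤ) = ⌊x⌋ * q := by exact_mod_cast heq2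
    have hd : ((q : ℤ)) ∣ ((n * p : ℕ) : ℤ) := ⟨⌊x⌋, by linarith [mul_comm (⌊x⌋) ((q : ℤ))]⟩
    exact hndvd (by exact_mod_cast hd)
  have hbound : ∀ j, j < q → ocoF p q (n + j) - ocoF p q j ≤ c := by
    intro j hj
    by_cases hnj : n + j < q
    · simp only [ocoF, if_neg (by omega : ¬ q ≤ n + j), if_neg (by omega : ¬ q ≤ j)]
      have hsum : (((n + j : ℕ) : ℚ) * p) / q = x + ((j : ℚ) * p) / q := by
        rw [hx]; push_cast; ring
      rw [hsum]
      have := Int.ceil_add_le x (((j : ℚ) * p) / q)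
      omega
    · simp only [ocoF, if_pos (by omega : q ≤ n + j), if_neg (by omega : ¬ q ≤ j)]
      have key : (p : ℚ) - x ≤ ((j : ℚ) * p) / q := by
        rw [hx, sub_le_iff_le_add, ← add_div, le_div_iff₀ hq0]
        have hjn : (q : ℚ) ≤ (j : ℚ) + (n : ℚ) := by exact_mod_cast (by omega : q ≤ j + n)
        have hp0 : (0 : ℚ) ≤ (p : ℚ) := by positivity
        nlinarith
      have h2 : (p : ℤ) - ⌊x⌋ ≤ ⌈((j : ℚ) * p) / q⌉ := by
        have hmono := Int.ceil_le_ceil key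
        have hrw : ((p : ℚ) - x) = (-x) + ((p : ℤ) : ℚ) := by push_cast; ring
        rw [hrw, Int.ceil_add_intCast, Int.ceil_neg] at hmono
        omega
      omega
  have hF0 : ocoF p q 0 = 0 := by
    rw [ocoF, if_neg (by omega : ¬ q ≤ 0)]
    norm_num
  have hFn : ocoF p q n = c := by
    simp only [ocoF, if_neg (by omega : ¬ q ≤ n)]
    rw [hc, hx]
  have hex : ∃ j, ocoF p q (n + j) - ocoF p q j < c := by
    refine ⟨q, ?_⟩
    simp only [ocoF, if_pos (by omega : q ≤ n + q), if_pos (le_refl q)]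
    omega
  set k := Nat.find hex with hk
  have hkq : k ≤ q := by
    apply Nat.find_le
    simp only [ocoF, if_pos (by omega : q ≤ n + q), if_pos (le_refl q)]
    omega
  have hkpos : 0 < k := by
    rcases Nat.eq_zero_or_pos k with h0 | h0
    · exfalso
      have := Nat.find_spec hex
      rw [← hk, h0] at this
      rw [Nat.add_zero, hFn, hF0] at this
      omega
    · exact h0
  have hDeq : ∀ j, j < k → ocoF p q (n + j) - ocoF p q j = c := by
    intro j hj
    have h1 := Nat.find_min hex hj
    have h2 := hbound j (by omega)
    omega
  refine ⟨k - 1, ?_, ?_⟩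
  · intro i hi
    rw [ocoF_step p q hp hpq (n + i), ocoF_step p q hp hpq i]
    have e1 := hDeq i (by omega)
    have e2 := hDeq (i + 1) (by omega)
    have hadd : n + i + 1 = n + (i + 1) := by omega
    rw [hadd]
    omega
  · rw [ocoF_step p q hp hpq (n + (k - 1)), ocoF_step p q hp hpq (k - 1)]
    have e1 := hDeq (k - 1) (by omega)
    have e2 : ocoF p q (n + k) - ocoF p q k < c := Nat.find_spec hex
    have h1 : n + (k - 1) + 1 = n + k := by omega
    have h2 : (k - 1) + 1 = k := by omega
    rw [h1, h2]
    omega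
end

section
/- Let p, q be coprime integers with 0 < p < q. Define v : ℕ → ℤ by v(0) = 1 and v(n) = ⌊(n+1)p/q⌋ − ⌊n·p/q⌋ for n ≥ 1 (so v is the infinite word 1·(z_{p,q}10)^ω). Then for every n ≥ 1, the shifted sequence (v(n+i))_{i≥0} is lexicographically strictly smaller than (v(i))_{i≥0}; i.e., 1(z_{p,q}10)^ω is lexicographically greater than all of its proper suffixes. -/
def oneCentralOneZero (p q : ℕ) (n : ℕ) : ℤ :=
  if n = 0 then 1
  else ⌊(((n : ℚ) + 1) * p) / q⌋ - ⌊((n : ℚ) * p) / q⌋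

namespace OCOZhelp

def F (p q k : ℕ) : ℤ := ⌊((k : ℚ) * p) / q⌋

variable {p q : ℕ}

lemma v_zero : oneCentralOneZero p q 0 = 1 := by simp [oneCentralOneZero]

lemma v_pos (n : ℕ) (hn : n ≠ 0) :
    oneCentralOneZero p q n = F p q (n + 1) - F p q n := by
  simp only [oneCentralOneZero, if_neg hn, F]
  push_cast
  ring_nf

lemma F_mono (hq : 0 < q) (k : ℕ) : F p q k ≤ F p q (k + 1) := by
  apply Int.floor_le_floor
  have hq' : (0:ℚ) < q := by exact_mod_cast hq
  push_cast
  rw [div_le_div_iff_of_pos_right hq']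
  nlinarith [Nat.cast_nonneg (α := ℚ) p]

lemma F_succ_le (hq : 0 < q) (hpq : p < q) (k : ℕ) :
    F p q (k + 1) ≤ F p q k + 1 := by
  have hq' : (0:ℚ) < q := by exact_mod_cast hq
  have hpq' : (p:ℚ) < q := by exact_mod_cast hpq
  have hsplit : (((k:ℕ)+1 : ℕ):ℚ) * p / q = (k:ℚ) * p / q + (p:ℚ)/q := by
    field_simp; push_cast; ring
  have hle1 : (p:ℚ)/q ≤ 1 := by rw [div_le_one hq']; exact hpq'.le
  have : (((k:ℕ)+1 : ℕ):ℚ) * p / q ≤ (k:ℚ) * p / q + 1 := by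
    rw [hsplit]; linarith
  calc F p q (k+1) ≤ ⌊(k:ℚ) * p / q + 1⌋ := Int.floor_le_floor this
    _ = F p q k + 1 := by rw [Int.floor_add_one]; rfl

lemma F_one (hq : 0 < q) (hpq : p < q) : F p q 1 = 0 := by
  have hq' : (0:ℚ) < q := by exact_mod_cast hq
  have hpq' : (p:ℚ) < q := by exact_mod_cast hpq
  simp only [F, Nat.cast_one, one_mul]
  rw [Int.floor_eq_zero_iff]
  constructor
  · positivity
  · rw [div_lt_one hq']; exact hpq'

lemma F_add_q (hq : 0 < q) (k : ℕ) : F p q (k + q) = F p q k + p := by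
  have hq' : (q:ℚ) ≠ 0 := by positivity
  have : ((k + q : ℕ):ℚ) * p / q = (k:ℚ) * p / q + (p:ℕ) := by
    push_cast; field_simp
  simp only [F, this, Int.floor_add_natCast]

/-- ⌊x+y⌋ ≤ ⌊x⌋+⌊y⌋+1 specialized -/
lemma F_add_le (hq : 0 < q) (a b : ℕ) :
    F p q (a + b) ≤ F p q a + F p q b + 1 := by
  have hq' : (0:ℚ) < q := by exact_mod_cast hq
  have key : ((a + b : ℕ):ℚ) * p / q = (a:ℚ) * p / q + (b:ℚ) * p / q := by
    push_cast; field_simp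
  simp only [F, key]
  have h1 := Int.lt_floor_add_one ((a:ℚ) * p / q)
  have h2 := Int.lt_floor_add_one ((b:ℚ) * p / q)
  have : (a:ℚ) * p / q + (b:ℚ) * p / q < ((⌊(a:ℚ) * p / q⌋ + ⌊(b:ℚ) * p / q⌋ + 1 : ℤ) : ℚ) + 1 := by
    push_cast; linarith
  have hlt : ⌊(a:ℚ) * p / q + (b:ℚ) * p / q⌋ < ⌊(a:ℚ) * p / q⌋ + ⌊(b:ℚ) * p / q⌋ + 2 := by
    rw [Int.floor_lt]
    push_cast
    linarith
  omega

/-- partial-sum identity under agreement of prefixes -/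
lemma key_ind (hq : 0 < q) (hpq : p < q) (n : ℕ) (hn : 1 ≤ n) (m : ℕ) (hm : 1 ≤ m)
    (h : ∀ i, i < m → oneCentralOneZero p q (n + i) = oneCentralOneZero p q i) :
    F p q (n + m) = F p q n + F p q m + 1 := by
  induction m, hm using Nat.le_induction with
  | base =>
    have h0 := h 0 (by norm_num)
    rw [v_pos (n + 0) (by omega)] at h0
    simp only [Nat.add_zero] at h0
    rw [v_zero] at h0
    rw [F_one hq hpq]
    omega
  | succ m hm ih =>
    have ihm := ih (fun i hi => h i (by omega))
    have hm' := h m (by omega)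
    rw [v_pos (n + m) (by omega), v_pos m (by omega)] at hm'
    have : n + (m + 1) = (n + m) + 1 := by ring
    rw [this]
    omega

end OCOZhelp

open OCOZhelp in
/-- For coprime integers `0 < p < q`, the infinite word `1(z_{p,q}10)^ω` is
lexicographically greater than all of its proper suffixes. -/
theorem oneCentralOneZero_gt_proper_suffixes (p q : ℕ) (hp : 0 < p) (hpq : p < q)
    (hcop : Nat.Coprime p q) :
    ∀ n : ℕ, 1 ≤ n →
      ∃ m : ℕ, (∀ i : ℕ, i < m → oneCentralOneZero p q (n + i) = oneCentralOneZero p q i) ∧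
        oneCentralOneZero p q (n + m) < oneCentralOneZero p q m := by
  intro n hn
  have hq : 0 < q := lt_trans hp hpq
  -- there is a disagreement index
  have hex : ∃ m, oneCentralOneZero p q (n + m) ≠ oneCentralOneZero p q m := by
    by_contra hall
    push_neg at hall
    have := key_ind hq hpq n hn q hq (fun i _ => hall i)
    -- F (n+q) = F n + p, F q = p
    have h1 : F p q (n + q) = F p q n + p := F_add_q hq n
    have h0 : F p q 0 = 0 := by simp [F]
    have h2 := F_add_q (p := p) hq 0
    rw [Nat.zero_add] at h2
    omega
  classical
  obtain ⟨m, hmspec, hlt⟩ :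
      ∃ m, oneCentralOneZero p q (n + m) ≠ oneCentralOneZero p q m ∧
        ∀ i, i < m → oneCentralOneZero p q (n + i) = oneCentralOneZero p q i := by
    refine ⟨Nat.find hex, Nat.find_spec hex, fun i hi => ?_⟩
    by_contra hne
    exact absurd (Nat.find_le hne) (Nat.not_le.mpr hi)
  refine ⟨m, hlt, ?_⟩
  rcases lt_or_gt_of_ne hmspec with h | h
  · exact h
  · exfalso
    -- v(n+m) > v(m). Values: v(n+m) ≤ 1, v(m) ≥ 0 when m ≥ 1, v(0)=1.
    rcases Nat.eq_zero_or_pos m with hm0 | hm1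
    · subst hm0
      rw [Nat.add_zero, v_pos n (by omega), v_zero] at h
      have := F_succ_le hq hpq n
      omega
    · have hvm : oneCentralOneZero p q m = F p q (m+1) - F p q m := v_pos m (by omega)
      have hvnm : oneCentralOneZero p q (n+m) = F p q (n+m+1) - F p q (n+m) := v_pos (n+m) (by omega)
      have h1 := F_mono (p := p) hq m
      have h2 := F_succ_le hq hpq (n + m)
      have h3 := key_ind hq hpq n hn m hm1 hlt
      have h4 := F_add_le (p := p) hq n (m + 1)
      have : n + (m + 1) = n + m + 1 := by ring
      rw [this] at h4
      omega
end

section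
/- Let a, b be integers with 0 ≤ a < b and let α ∈ (0,1) be irrational. Define u : ℕ → ℤ by u(n) = a + (b − a)·(⌈α(n+1)⌉ − ⌈αn⌉) (the upper mechanical word s'_{α,0} written over the alphabet {a, b}). Then there exists a unique β ∈ (b, b+1) whose greedy β-expansion of 1 has digit sequence u, i.e., with r(0) = 1 and r(k+1) = β·r(k) − ⌊β·r(k)⌋ one has ⌊β·r(n)⌋ = u(n) for all n ≥ 0; moreover this β satisfies ∑_{n=0}^∞ u(n)·β^{−(n+1)} = 1. -/
/-- The greedy β-expansion orbit of 1: `r 0 = 1`, `r (k+1) = β·r k − ⌊β·r k⌋`. -/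
noncomputable def betaOrbit (β : ℝ) : ℕ → ℝ
  | 0 => 1
  | k + 1 => β * betaOrbit β k - ⌊β * betaOrbit β k⌋

/-- The upper mechanical word of slope `α` (intercept 0) over the alphabet `{a, b}`:
`u n = a + (b − a)·(⌈α(n+1)⌉ − ⌈αn⌉)`. -/
noncomputable def upperMechanical (a b : ℤ) (α : ℝ) (n : ℕ) : ℤ :=
  a + (b - a) * (⌈α * ((n : ℝ) + 1)⌉ - ⌈α * (n : ℝ)⌉)

section Aux

variable {a b : ℤ} {α : ℝ}

/-- ceil step is 0 or 1 -/
lemma step_nonneg (h0 : 0 ≤ α) (n : ℕ) : 0 ≤ ⌈α * ((n : ℝ) + 1)⌉ - ⌈α * (n : ℝ)⌉ := by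
  have h : α * (n : ℝ) ≤ α * ((n : ℝ) + 1) := by nlinarith
  have := Int.ceil_le_ceil h
  omega

lemma step_le_one (h1 : α ≤ 1) (n : ℕ) : ⌈α * ((n : ℝ) + 1)⌉ - ⌈α * (n : ℝ)⌉ ≤ 1 := by
  have h : α * ((n : ℝ) + 1) ≤ α * (n : ℝ) + 1 := by nlinarith
  have h2 : ⌈α * ((n : ℝ) + 1)⌉ ≤ ⌈α * (n : ℝ) + (1 : ℤ)⌉ := by
    apply Int.ceil_le_ceil; push_cast; linarith
  rw [Int.ceil_add_intCast] at h2
  omega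

lemma u_ge (ha : 0 ≤ a) (hab : a < b) (h0 : 0 ≤ α) (n : ℕ) :
    a ≤ upperMechanical a b α n := by
  have := step_nonneg (α := α) h0 n
  unfold upperMechanical; nlinarith

lemma u_le (hab : a < b) (h0 : 0 ≤ α) (h1 : α ≤ 1) (n : ℕ) :
    upperMechanical a b α n ≤ b := by
  have h1' := step_le_one (α := α) h1 n
  have h0' := step_nonneg (α := α) h0 n
  unfold upperMechanical; nlinarith

lemma u_zero (h0 : 0 < α) (h1 : α < 1) : upperMechanical a b α 0 = b := by
  have hc : ⌈α * (((0:ℕ) : ℝ) + 1)⌉ = 1 := by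
    rw [Int.ceil_eq_iff]
    constructor <;> push_cast <;> nlinarith
  unfold upperMechanical
  rw [hc]
  norm_num

/-- telescoping partial sums -/
lemma u_partial (m j : ℕ) :
    ∑ k ∈ Finset.range j, upperMechanical a b α (m + k)
      = j * a + (b - a) * (⌈α * ((m + j : ℕ) : ℝ)⌉ - ⌈α * ((m : ℕ) : ℝ)⌉) := by
  induction j with
  | zero => simp
  | succ j ih =>
    rw [Finset.sum_range_succ, ih]
    have e1 : ((m + (j + 1) : ℕ) : ℝ) = ((m + j : ℕ) : ℝ) + 1 := by push_cast; ring
    rw [e1]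
    unfold upperMechanical
    push_cast
    ring

/-- partial sums of shifted word minus word are nonpositive -/
lemma D_nonpos (hab : a < b) (m j : ℕ) :
    ∑ k ∈ Finset.range j, (upperMechanical a b α (m + k) - upperMechanical a b α k) ≤ 0 := by
  rw [Finset.sum_sub_distrib, u_partial m j]
  have h0 := u_partial (a := a) (b := b) (α := α) 0 j
  simp only [zero_add] at h0
  rw [h0]
  have hsub : ⌈α * ((m + j : ℕ) : ℝ)⌉ ≤ ⌈α * ((m : ℕ) : ℝ)⌉ + ⌈α * ((j : ℕ) : ℝ)⌉ := by
    have : α * ((m + j : ℕ) : ℝ) = α * ((m : ℕ) : ℝ) + α * ((j : ℕ) : ℝ) := by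
      push_cast; ring
    rw [this]
    exact Int.ceil_add_le _ _
  have hz : ⌈α * ((0 : ℕ) : ℝ)⌉ = 0 := by norm_num
  rw [hz]
  nlinarith [hsub]

/-- density of fractional parts -/
lemma exists_fract_lt (hα : Irrational α) {ε : ℝ} (hε : 0 < ε) :
    ∃ j : ℕ, 0 < j ∧ Int.fract (α * j) < ε := by
  have hδ0 : 0 < min ε (1/2) := lt_min hε (by norm_num)
  set δ := min ε (1/2) with hδdef
  have hδε : δ ≤ ε := min_le_left _ _
  have hδh : δ ≤ 1/2 := min_le_right _ _
  have hdense : Dense ((AddSubgroup.closure {1, α} : AddSubgroup ℝ) : Set ℝ) := by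
    rcases AddSubgroup.dense_or_cyclic (AddSubgroup.closure {1, α}) with hd | ⟨g, hg⟩
    · exact hd
    · exfalso
      have h1 : (1 : ℝ) ∈ AddSubgroup.closure ({1, α} : Set ℝ) :=
        AddSubgroup.subset_closure (by simp)
      have h2 : α ∈ AddSubgroup.closure ({1, α} : Set ℝ) :=
        AddSubgroup.subset_closure (by simp)
      rw [hg, AddSubgroup.mem_closure_singleton] at h1 h2
      obtain ⟨p, hp⟩ := h1
      obtain ⟨q, hq⟩ := h2
      rw [zsmul_eq_mul] at hp hq
      have hp0 : p ≠ 0 := by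
        rintro rfl
        norm_num at hp
      apply hα
      refine ⟨(q : ℚ) / (p : ℚ), ?_⟩
      push_cast
      rw [div_eq_iff (by exact_mod_cast hp0 : ((p : ℤ) : ℝ) ≠ 0)]
      calc (q : ℝ) = (q : ℝ) * 1 := by ring
        _ = (q : ℝ) * ((p : ℝ) * g) := by rw [hp]
        _ = α * p := by rw [← hq]; ring
  obtain ⟨s, hsS, hs0, hsδ⟩ := hdense.exists_mem_open isOpen_Ioo (Set.nonempty_Ioo.mpr hδ0)
  rw [SetLike.mem_coe, AddSubgroup.mem_closure_pair] at hsS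
  obtain ⟨p, q, hpq⟩ := hsS
  rw [zsmul_eq_mul, zsmul_eq_mul, mul_one] at hpq
  have hs1 : s < 1/2 := lt_of_lt_of_le hsδ hδh
  have hq0 : q ≠ 0 := by
    rintro rfl
    push_cast at hpq
    have h1 : (0 : ℝ) < (p : ℝ) := by linarith
    have h2 : (p : ℝ) < 1 := by linarith
    have h1' : (0 : ℤ) < p := by exact_mod_cast h1
    have h2' : p < 1 := by exact_mod_cast h2
    omega
  have hsirr : Irrational s := by
    rw [← hpq]
    exact (hα.intCast_mul hq0).intCast_add p
  rcases lt_or_gt_of_ne hq0 with hqneg | hqpos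
  · -- q < 0
    set K : ℤ := ⌊1/s⌋ with hKdef
    have h2s : (2 : ℝ) < 1/s := by rw [lt_div_iff₀ hs0]; linarith
    have hK2 : 2 ≤ K := Int.le_floor.mpr (by exact_mod_cast le_of_lt h2s)
    set k : ℕ := K.toNat with hkdef
    have hkK : (k : ℤ) = K := Int.toNat_of_nonneg (by omega)
    have hkR : ((k : ℕ) : ℝ) = (K : ℝ) := by exact_mod_cast congrArg (Int.cast : ℤ → ℝ) hkK
    have hkpos : 0 < k := by omega
    have hks_le : (k : ℝ) * s ≤ 1 := by
      have h := Int.floor_le (1/s)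
      rw [← hKdef] at h
      rw [hkR]
      rw [le_div_iff₀ hs0] at h
      linarith
    have hks_ne : (k : ℝ) * s ≠ 1 := by
      intro h
      apply hsirr
      refine ⟨1 / (k : ℚ), ?_⟩
      push_cast
      rw [div_eq_iff (by positivity : ((k : ℕ) : ℝ) ≠ 0)]
      linarith [h]
    have hks_lt : (k : ℝ) * s < 1 := lt_of_le_of_ne hks_le hks_ne
    have hk1s : 1 < ((k : ℝ) + 1) * s := by
      have h := Int.lt_floor_add_one (1/s)
      rw [← hKdef] at h
      rw [div_lt_iff₀ hs0] at h
      rw [hkR]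
      linarith
    set p' : ℕ := (-q).toNat with hp'def
    have hp'pos : 0 < p' := by omega
    have hp'R : ((p' : ℕ) : ℝ) = -(q : ℝ) := by
      have : (p' : ℤ) = -q := Int.toNat_of_nonneg (by omega)
      exact_mod_cast congrArg (Int.cast : ℤ → ℝ) this
    have hαp' : α * ((p' : ℕ) : ℝ) = (p : ℝ) - s := by
      rw [hp'R]; linarith [hpq]
    refine ⟨p' * k, by positivity, ?_⟩
    have e : α * ((p' * k : ℕ) : ℝ) = -((k : ℝ) * s) + ((K * p : ℤ) : ℝ) := by
      push_cast
      rw [← hkR]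
      push_cast
      linear_combination ((k : ℕ) : ℝ) * hαp'
    rw [e, Int.fract_add_intCast]
    have hfr : Int.fract ((k : ℝ) * s) = (k : ℝ) * s :=
      Int.fract_eq_self.mpr ⟨by positivity, hks_lt⟩
    rw [Int.fract_neg (by rw [hfr]; positivity), hfr]
    linarith
  · -- q > 0
    refine ⟨q.toNat, by omega, ?_⟩
    have hq' : ((q.toNat : ℕ) : ℝ) = (q : ℝ) := by
      have : ((q.toNat : ℕ) : ℤ) = q := Int.toNat_of_nonneg (le_of_lt hqpos)
      exact_mod_cast congrArg (Int.cast : ℤ → ℝ) this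
    rw [hq']
    have e : α * (q : ℝ) = s - (p : ℤ) := by linarith [hpq]
    rw [e, Int.fract_sub_intCast, Int.fract_eq_self.mpr ⟨le_of_lt hs0, by linarith⟩]
    linarith

lemma ceil_eq_floor_add_one_of_irr {x : ℝ} (h : Irrational x) : ⌈x⌉ = ⌊x⌋ + 1 := by
  have h1 : ⌈x⌉ ≤ ⌊x⌋ + 1 := Int.ceil_le_floor_add_one x
  have h2 : ⌊x⌋ < ⌈x⌉ := by
    by_contra hc
    push_neg at hc
    have hx1 : x ≤ (⌈x⌉ : ℝ) := Int.le_ceil x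
    have hx2 : ((⌊x⌋ : ℤ) : ℝ) ≤ x := Int.floor_le x
    have hceil : ((⌈x⌉ : ℤ) : ℝ) ≤ ((⌊x⌋ : ℤ) : ℝ) := by exact_mod_cast hc
    have : x = ((⌊x⌋ : ℤ) : ℝ) := le_antisymm (by linarith) hx2
    exact h.ne_int ⌊x⌋ this
  omega

/-- strict inequality somewhere -/
lemma D_strict (hab : a < b) (hα : Irrational α) (h0 : 0 < α) (h1 : α < 1)
    {m : ℕ} (hm : 1 ≤ m) :
    ∃ j : ℕ, 1 ≤ j ∧
      ∑ k ∈ Finset.range j, (upperMechanical a b α (m + k) - upperMechanical a b α k) ≤ -1 := by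
  have hirr_m : Irrational (α * ((m : ℕ) : ℝ)) := by
    rw [mul_comm]; exact hα.natCast_mul (by omega)
  have hεpos : 0 < 1 - Int.fract (α * ((m : ℕ) : ℝ)) := by
    linarith [Int.fract_lt_one (α * ((m : ℕ) : ℝ))]
  obtain ⟨j, hj0, hjlt⟩ := exists_fract_lt hα hεpos
  refine ⟨j, hj0, ?_⟩
  have hirr_j : Irrational (α * ((j : ℕ) : ℝ)) := by
    rw [mul_comm]; exact hα.natCast_mul (by omega)
  rw [Finset.sum_sub_distrib, u_partial m j]
  have h0' := u_partial (a := a) (b := b) (α := α) 0 j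
  simp only [zero_add] at h0'
  rw [h0']
  have hz : ⌈α * ((0 : ℕ) : ℝ)⌉ = 0 := by norm_num
  rw [hz]
  have hcm := ceil_eq_floor_add_one_of_irr hirr_m
  have hcj := ceil_eq_floor_add_one_of_irr hirr_j
  have hkey : ⌈α * ((m + j : ℕ) : ℝ)⌉ ≤ ⌊α * ((m : ℕ) : ℝ)⌋ + ⌊α * ((j : ℕ) : ℝ)⌋ + 1 := by
    apply Int.ceil_le.mpr
    have f1 := Int.self_sub_floor (α * ((m : ℕ) : ℝ))
    have f2 := Int.self_sub_floor (α * ((j : ℕ) : ℝ))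
    have hfnn := Int.fract_nonneg (α * ((j : ℕ) : ℝ))
    push_cast
    push_cast at f1 f2
    nlinarith [hjlt]
  nlinarith [hkey, hcm, hcj, hab]

lemma exists_b_letter (hab : a < b) (h0 : 0 < α) (h1 : α < 1) :
    ∃ m : ℕ, 1 ≤ m ∧ upperMechanical a b α m = b := by
  by_contra h
  push_neg at h
  have hc : ∀ m : ℕ, 1 ≤ m → ⌈α * ((m : ℝ) + 1)⌉ = ⌈α * (m : ℝ)⌉ := by
    intro m hm
    have h1' := step_le_one (α := α) (le_of_lt h1) m
    have h0' := step_nonneg (α := α) (le_of_lt h0) m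
    rcases (by omega : ⌈α * ((m : ℝ) + 1)⌉ - ⌈α * (m : ℝ)⌉ = 0 ∨
        ⌈α * ((m : ℝ) + 1)⌉ - ⌈α * (m : ℝ)⌉ = 1) with hd | hd
    · omega
    · exfalso
      apply h m hm
      unfold upperMechanical
      rw [hd]; ring
  have hind : ∀ j : ℕ, ⌈α * ((j + 1 : ℕ) : ℝ)⌉ = ⌈α * ((1 : ℕ) : ℝ)⌉ := by
    intro j
    induction j with
    | zero => rfl
    | succ j ih =>
      have e1 : ((j + 1 + 1 : ℕ) : ℝ) = ((j + 1 : ℕ) : ℝ) + 1 := by push_cast; ring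
      rw [e1, hc (j + 1) (by omega), ih]
  obtain ⟨N, hN⟩ := exists_nat_gt (1 / α)
  have hN1 : 1 / α < (N : ℝ) := hN
  have hαN : 1 < α * ((N + 1 : ℕ) : ℝ) := by
    push_cast
    rw [div_lt_iff₀ h0] at hN1
    nlinarith
  have h2 : (2 : ℤ) ≤ ⌈α * ((N + 1 : ℕ) : ℝ)⌉ := by
    have := Int.le_ceil (α * ((N + 1 : ℕ) : ℝ))
    have : (1 : ℝ) < ⌈α * ((N + 1 : ℕ) : ℝ)⌉ := lt_of_lt_of_le hαN this
    exact_mod_cast (by exact_mod_cast this : (1 : ℤ) < ⌈α * ((N + 1 : ℕ) : ℝ)⌉)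
  rw [hind N] at h2
  have hle : ⌈α * ((1 : ℕ) : ℝ)⌉ ≤ 1 := by
    apply Int.ceil_le.mpr
    push_cast
    nlinarith
  omega

lemma exists_a_letter (hab : a < b) (h0 : 0 < α) (h1 : α < 1) :
    ∃ m : ℕ, upperMechanical a b α m = a := by
  by_contra h
  push_neg at h
  have hc : ∀ m : ℕ, ⌈α * ((m : ℝ) + 1)⌉ = ⌈α * (m : ℝ)⌉ + 1 := by
    intro m
    have h1' := step_le_one (α := α) (le_of_lt h1) m
    have h0' := step_nonneg (α := α) (le_of_lt h0) m
    rcases (by omega : ⌈α * ((m : ℝ) + 1)⌉ - ⌈α * (m : ℝ)⌉ = 0 ∨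
        ⌈α * ((m : ℝ) + 1)⌉ - ⌈α * (m : ℝ)⌉ = 1) with hd | hd
    · exfalso
      apply h m
      unfold upperMechanical
      rw [hd]; ring
    · omega
  have hind : ∀ j : ℕ, ⌈α * ((j : ℕ) : ℝ)⌉ = j := by
    intro j
    induction j with
    | zero => norm_num
    | succ j ih =>
      have e1 : ((j + 1 : ℕ) : ℝ) = ((j : ℕ) : ℝ) + 1 := by push_cast; ring
      rw [e1, hc j, ih]
      push_cast; ring
  obtain ⟨N, hN⟩ := exists_nat_gt (1 / (1 - α))
  have h1α : (0 : ℝ) < 1 - α := by linarith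
  have hkey : α * ((N : ℕ) : ℝ) + 1 < (N : ℝ) := by
    rw [div_lt_iff₀ h1α] at hN
    push_cast
    nlinarith
  have hceil : (⌈α * ((N : ℕ) : ℝ)⌉ : ℝ) < (N : ℝ) := by
    have := Int.ceil_lt_add_one (α * ((N : ℕ) : ℝ))
    linarith
  rw [hind N] at hceil
  exact absurd hceil (by push_cast; simp)

lemma u_summable (ha : 0 ≤ a) (hab : a < b) (h0 : 0 ≤ α) (h1 : α ≤ 1)
    {x : ℝ} (hx0 : 0 ≤ x) (hx1 : x < 1) (m : ℕ) :
    Summable (fun k : ℕ => (upperMechanical a b α (m + k) : ℝ) * x ^ (k + 1)) := by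
  apply Summable.of_nonneg_of_le (f := fun k : ℕ => (b : ℝ) * x ^ k)
  · intro k
    have := u_ge ha hab h0 (m + k)
    have hx : (0 : ℝ) ≤ x ^ (k + 1) := pow_nonneg hx0 _
    have : (0 : ℝ) ≤ (upperMechanical a b α (m + k) : ℝ) := by
      exact_mod_cast le_trans ha this
    positivity
  · intro k
    have hub : (upperMechanical a b α (m + k) : ℝ) ≤ (b : ℝ) := by
      exact_mod_cast u_le hab h0 h1 (m + k)
    have hlb : (0 : ℝ) ≤ (upperMechanical a b α (m + k) : ℝ) := by
      exact_mod_cast le_trans ha (u_ge ha hab h0 (m + k))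
    have hpow : x ^ (k + 1) ≤ x ^ k := pow_le_pow_of_le_one hx0 (le_of_lt hx1) (by omega)
    have hxk : (0 : ℝ) ≤ x ^ (k + 1) := pow_nonneg hx0 _
    nlinarith
  · exact (summable_geometric_of_lt_one hx0 hx1).mul_left _

/-- the key strict tail inequality via Abel summation -/
lemma tail_lt (ha : 0 ≤ a) (hab : a < b) (hα : Irrational α) (h0 : 0 < α) (h1 : α < 1)
    {x : ℝ} (hx0 : 0 < x) (hx1 : x < 1) {m : ℕ} (hm : 1 ≤ m) :
    ∑' k : ℕ, (upperMechanical a b α (m + k) : ℝ) * x ^ (k + 1)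
      < ∑' k : ℕ, (upperMechanical a b α k : ℝ) * x ^ (k + 1) := by
  have hs1 := u_summable ha hab (le_of_lt h0) (le_of_lt h1) (le_of_lt hx0) hx1 m
  have hs0' := u_summable ha hab (le_of_lt h0) (le_of_lt h1) (le_of_lt hx0) hx1 0
  have hs0 : Summable (fun k : ℕ => (upperMechanical a b α k : ℝ) * x ^ (k + 1)) := by
    simpa using hs0'
  set F : ℕ → ℝ := fun k =>
    ((upperMechanical a b α (m + k) : ℝ) - (upperMechanical a b α k : ℝ)) * x ^ (k + 1) with hF
  have hFs : Summable F := by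
    apply (hs1.sub hs0).congr
    intro k
    simp only [hF]
    ring
  set D : ℕ → ℝ := fun j =>
    ∑ k ∈ Finset.range j, ((upperMechanical a b α (m + k) : ℝ) - (upperMechanical a b α k : ℝ))
    with hDdef
  have hDcast : ∀ j : ℕ, D j =
      ((∑ k ∈ Finset.range j, (upperMechanical a b α (m + k) - upperMechanical a b α k) : ℤ) : ℝ) := by
    intro j
    rw [hDdef]
    push_cast
    rfl
  have hD0 : ∀ j, D j ≤ 0 := by
    intro j
    rw [hDcast j]
    exact_mod_cast D_nonpos hab m j
  obtain ⟨j0, hj01, hj0le⟩ := D_strict hab hα h0 h1 hm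
  have hDj0 : D j0 ≤ -1 := by
    rw [hDcast j0]
    exact_mod_cast hj0le
  have hAbel : ∀ N, ∑ k ∈ Finset.range N, F k =
      (∑ j ∈ Finset.range N, D (j + 1) * (x ^ (j + 1) - x ^ (j + 2))) + D N * x ^ (N + 1) := by
    intro N
    induction N with
    | zero => simp [hDdef]
    | succ N ih =>
      rw [Finset.sum_range_succ, ih, Finset.sum_range_succ (f := fun j => D (j + 1) * (x ^ (j + 1) - x ^ (j + 2)))]
      have hDs : D (N + 1) =
          D N + ((upperMechanical a b α (m + N) : ℝ) - (upperMechanical a b α N : ℝ)) := by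
        rw [hDdef]
        exact Finset.sum_range_succ _ N
      rw [hDs]
      simp only [hF]
      ring
  have hxpow : ∀ i j : ℕ, i ≤ j → x ^ j ≤ x ^ i := by
    intro i j hij
    exact pow_le_pow_of_le_one (le_of_lt hx0) (le_of_lt hx1) hij
  have hterm : ∀ j : ℕ, D (j + 1) * (x ^ (j + 1) - x ^ (j + 2)) ≤ 0 := by
    intro j
    apply mul_nonpos_of_nonpos_of_nonneg (hD0 _)
    have := hxpow (j + 1) (j + 2) (by omega)
    linarith
  set δ : ℝ := D j0 * (x ^ j0 - x ^ (j0 + 1)) with hδdef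
  have hbound : ∀ N, j0 ≤ N → ∑ k ∈ Finset.range N, F k ≤ δ := by
    intro N hN
    rw [hAbel N]
    have h1t : D N * x ^ (N + 1) ≤ 0 :=
      mul_nonpos_of_nonpos_of_nonneg (hD0 N) (pow_nonneg (le_of_lt hx0) _)
    have hmem : j0 - 1 ∈ Finset.range N := Finset.mem_range.mpr (by omega)
    have hsingle : ∑ j ∈ Finset.range N, D (j + 1) * (x ^ (j + 1) - x ^ (j + 2)) ≤
        D ((j0 - 1) + 1) * (x ^ ((j0 - 1) + 1) - x ^ ((j0 - 1) + 2)) := by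
      have hs := Finset.single_le_sum
        (f := fun j => -(D (j + 1) * (x ^ (j + 1) - x ^ (j + 2))))
        (fun i _ => neg_nonneg.mpr (hterm i)) hmem
      simp only [Finset.sum_neg_distrib] at hs
      linarith
    have e1 : (j0 - 1) + 1 = j0 := by omega
    have e2 : (j0 - 1) + 2 = j0 + 1 := by omega
    rw [e1, e2] at hsingle
    linarith
  have hxlt : x ^ (j0 + 1) < x ^ j0 := pow_lt_pow_right_of_lt_one₀ hx0 hx1 (by omega)
  have hδneg : δ < 0 := by
    rw [hδdef]
    nlinarith
  have htsum : ∑' k, F k ≤ δ := by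
    apply le_of_tendsto hFs.hasSum.tendsto_sum_nat
    filter_upwards [Filter.eventually_ge_atTop j0] with N hN using hbound N hN
  have hdiff : ∑' k, F k =
      (∑' k : ℕ, (upperMechanical a b α (m + k) : ℝ) * x ^ (k + 1)) -
      (∑' k : ℕ, (upperMechanical a b α k : ℝ) * x ^ (k + 1)) := by
    rw [← Summable.tsum_sub hs1 hs0]
    apply tsum_congr
    intro k
    simp only [hF]
    ring
  rw [hdiff] at htsum
  linarith

/-- tail recursion -/
lemma tail_rec (ha : 0 ≤ a) (hab : a < b) (h0 : 0 ≤ α) (h1 : α ≤ 1)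
    {x : ℝ} (hx0 : 0 ≤ x) (hx1 : x < 1) (m : ℕ) :
    ∑' k : ℕ, (upperMechanical a b α (m + k) : ℝ) * x ^ (k + 1)
      = (upperMechanical a b α m : ℝ) * x
        + x * ∑' k : ℕ, (upperMechanical a b α (m + 1 + k) : ℝ) * x ^ (k + 1) := by
  rw [Summable.tsum_eq_zero_add (u_summable ha hab h0 h1 hx0 hx1 m)]
  rw [← tsum_mul_left]
  congr 1
  · norm_num
  · apply tsum_congr
    intro k
    have e : m + (k + 1) = m + 1 + k := by omega
    rw [e]
    ring

/-- digit property implies the series sums to 1 -/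
lemma digits_hasSum (ha : 0 ≤ a) (hab : a < b) (h0 : 0 ≤ α) (h1 : α ≤ 1)
    {β : ℝ} (hb : (b : ℝ) < β) (hb1 : β < (b : ℝ) + 1)
    (hd : ∀ n : ℕ, ⌊β * betaOrbit β n⌋ = upperMechanical a b α n) :
    ∑' n : ℕ, (upperMechanical a b α n : ℝ) / β ^ (n + 1) = 1 := by
  have hb1 : (1 : ℝ) ≤ (b : ℝ) := by exact_mod_cast (by omega : (1 : ℤ) ≤ b)
  have hβ1 : (1 : ℝ) < β := lt_of_le_of_lt hb1 hb
  have hβ0 : (0 : ℝ) < β := by linarith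
  have horb : ∀ n, 0 ≤ betaOrbit β n ∧ betaOrbit β n ≤ 1 := by
    intro n
    induction n with
    | zero => exact ⟨zero_le_one, le_refl 1⟩
    | succ n ih =>
      have he : betaOrbit β (n + 1) = Int.fract (β * betaOrbit β n) := rfl
      rw [he]
      exact ⟨Int.fract_nonneg _, le_of_lt (Int.fract_lt_one _)⟩
  have hpart : ∀ n, ∑ k ∈ Finset.range n, (upperMechanical a b α k : ℝ) / β ^ (k + 1)
      = 1 - betaOrbit β n / β ^ n := by
    intro n
    induction n with
    | zero => simp [betaOrbit]
    | succ n ih =>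
      rw [Finset.sum_range_succ, ih]
      have he : betaOrbit β (n + 1)
          = β * betaOrbit β n - ((upperMechanical a b α n : ℤ) : ℝ) := by
        show β * betaOrbit β n - ((⌊β * betaOrbit β n⌋ : ℤ) : ℝ) = _
        rw [hd n]
      rw [he]
      have hβn : β ^ n ≠ 0 := by positivity
      have hβn1 : β ^ (n + 1) ≠ 0 := by positivity
      field_simp
      ring
  have hinv0 : (0 : ℝ) ≤ β⁻¹ := by positivity
  have hinv1 : β⁻¹ < 1 := by
    rw [inv_lt_one_iff₀]; right; exact hβ1
  have hsum : Summable (fun n : ℕ => (upperMechanical a b α n : ℝ) / β ^ (n + 1)) := by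
    apply (u_summable ha hab h0 h1 hinv0 hinv1 0).congr
    intro k
    rw [zero_add, div_eq_mul_inv, inv_pow]
  have h2 : Filter.Tendsto (fun n => betaOrbit β n / β ^ n) Filter.atTop (nhds 0) := by
    apply squeeze_zero (fun n => div_nonneg (horb n).1 (pow_nonneg (le_of_lt hβ0) n))
      (g := fun n => (β⁻¹) ^ n)
    · intro n
      rw [div_le_iff₀ (by positivity), inv_pow, inv_mul_cancel₀ (by positivity)]
      exact (horb n).2
    · exact tendsto_pow_atTop_nhds_zero_of_lt_one hinv0 hinv1
  have htend : Filter.Tendsto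
      (fun n => ∑ k ∈ Finset.range n, (upperMechanical a b α k : ℝ) / β ^ (k + 1))
      Filter.atTop (nhds 1) := by
    have h3 : Filter.Tendsto (fun n => 1 - betaOrbit β n / β ^ n) Filter.atTop (nhds (1 - 0)) :=
      Filter.Tendsto.sub tendsto_const_nhds h2
    rw [sub_zero] at h3
    exact h3.congr (fun n => (hpart n).symm)
  exact tendsto_nhds_unique hsum.hasSum.tendsto_sum_nat htend

end Aux

/-- For integers `0 ≤ a < b` and irrational `α ∈ (0,1)`, there is a unique `β ∈ (b, b+1)`
whose greedy β-expansion of 1 has digit sequence the upper mechanical word `s'_{α,0}` over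
`{a,b}`; moreover this `β` satisfies `∑ u n·β^{−(n+1)} = 1`. -/
theorem exists_unique_self_sturmian (a b : ℤ) (ha : 0 ≤ a) (hab : a < b)
    (α : ℝ) (hα : Irrational α) (h0 : 0 < α) (h1 : α < 1) :
    (∃! β : ℝ, (b : ℝ) < β ∧ β < (b : ℝ) + 1 ∧
      ∀ n : ℕ, ⌊β * betaOrbit β n⌋ = upperMechanical a b α n) ∧
    (∀ β : ℝ, (b : ℝ) < β → β < (b : ℝ) + 1 →
      (∀ n : ℕ, ⌊β * betaOrbit β n⌋ = upperMechanical a b α n) →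
      ∑' n : ℕ, (upperMechanical a b α n : ℝ) / β ^ (n + 1) = 1) := by
  have hbR : (1 : ℝ) ≤ (b : ℝ) := by exact_mod_cast (by omega : (1 : ℤ) ≤ b)
  set u : ℕ → ℤ := upperMechanical a b α with hudef
  set g : ℝ → ℝ := fun x => ∑' n : ℕ, (u n : ℝ) * x ^ (n + 1) with hgdef
  have hgsum : ∀ {x : ℝ}, 0 ≤ x → x < 1 → Summable (fun n : ℕ => (u n : ℝ) * x ^ (n + 1)) := by
    intro x hx0 hx1
    simpa using u_summable ha hab (le_of_lt h0) (le_of_lt h1) hx0 hx1 0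
  have hu0 : u 0 = b := u_zero h0 h1
  have hunn : ∀ n, (0 : ℝ) ≤ (u n : ℝ) := fun n => by
    exact_mod_cast le_trans ha (u_ge ha hab (le_of_lt h0) n)
  have hule : ∀ n, (u n : ℝ) ≤ (b : ℝ) := fun n => by
    exact_mod_cast u_le hab (le_of_lt h0) (le_of_lt h1) n
  -- strict monotonicity of g on [0,1)
  have hmono : ∀ x y : ℝ, 0 ≤ x → x < y → y < 1 → g x < g y := by
    intro x y hx0 hxy hy1
    apply Summable.tsum_lt_tsum (i := 0)
    · intro n
      show (u n : ℝ) * x ^ (n + 1) ≤ (u n : ℝ) * y ^ (n + 1)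
      have hp : x ^ (n + 1) ≤ y ^ (n + 1) := pow_le_pow_left₀ hx0 (le_of_lt hxy) _
      nlinarith [hunn n]
    · show (u 0 : ℝ) * x ^ (0 + 1) < (u 0 : ℝ) * y ^ (0 + 1)
      have hp : x ^ (0 + 1) < y ^ (0 + 1) := by simpa using hxy
      have hb0 : (1 : ℝ) ≤ (u 0 : ℝ) := by rw [hu0]; exact hbR
      nlinarith [pow_nonneg hx0 1, pow_nonneg hx0 (0+1)]
    · exact hgsum hx0 (lt_trans hxy hy1)
    · exact hgsum (le_trans hx0 (le_of_lt hxy)) hy1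
  -- left endpoint
  set x1 : ℝ := ((b : ℝ) + 1)⁻¹ with hx1def
  have hx1pos : 0 < x1 := by rw [hx1def]; positivity
  have hx1lt1 : x1 < 1 := by
    rw [hx1def, inv_lt_one_iff₀]; right; linarith
  have hgeo : ∑' n : ℕ, (b : ℝ) * x1 ^ (n + 1) = 1 := by
    have hg1 : ∑' n : ℕ, x1 ^ n = (1 - x1)⁻¹ :=
      tsum_geometric_of_lt_one (le_of_lt hx1pos) hx1lt1
    calc ∑' n : ℕ, (b : ℝ) * x1 ^ (n + 1) = ∑' n : ℕ, ((b : ℝ) * x1) * x1 ^ n :=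
          tsum_congr (fun n => by ring)
      _ = ((b : ℝ) * x1) * ∑' n : ℕ, x1 ^ n := tsum_mul_left
      _ = ((b : ℝ) * x1) * (1 - x1)⁻¹ := by rw [hg1]
      _ = 1 := by
          rw [hx1def]
          have hb1 : (b : ℝ) + 1 ≠ 0 := by linarith
          have hb0 : (b : ℝ) ≠ 0 := by linarith
          field_simp
          simp [hb0]
  have hsumgeo : Summable (fun n : ℕ => (b : ℝ) * x1 ^ (n + 1)) := by
    apply ((summable_geometric_of_lt_one (le_of_lt hx1pos) hx1lt1).mul_left ((b : ℝ) * x1)).congr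
    intro n; ring
  have hgx1 : g x1 < 1 := by
    rw [← hgeo, hgdef]
    obtain ⟨n0, hn0⟩ := exists_a_letter hab h0 h1
    apply Summable.tsum_lt_tsum (i := n0)
    · intro n
      show (u n : ℝ) * x1 ^ (n + 1) ≤ (b : ℝ) * x1 ^ (n + 1)
      have := hule n
      nlinarith [pow_nonneg (le_of_lt hx1pos) (n + 1)]
    · show (u n0 : ℝ) * x1 ^ (n0 + 1) < (b : ℝ) * x1 ^ (n0 + 1)
      have hplt : (0 : ℝ) < x1 ^ (n0 + 1) := by positivity
      have hn0' : u n0 = a := hn0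
      have hab' : (u n0 : ℝ) < (b : ℝ) := by
        rw [hn0']
        exact_mod_cast hab
      nlinarith
    · exact hgsum (le_of_lt hx1pos) hx1lt1
    · exact hsumgeo
  -- right endpoint
  obtain ⟨m0, hm01, hm0b⟩ := exists_b_letter hab h0 h1
  set Q : ℝ := ((b : ℝ) + 1) ^ m0 with hQdef
  have hQ0 : 0 < Q := by rw [hQdef]; positivity
  set c : ℝ := min (1 / 2) ((b : ℝ) / Q) with hcdef
  have hc0 : 0 < c := lt_min (by norm_num) (by positivity)
  have hch : c ≤ 1 / 2 := min_le_left _ _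
  have hcq : c ≤ (b : ℝ) / Q := min_le_right _ _
  set x0 : ℝ := ((b : ℝ) + c)⁻¹ with hx0def
  have hbc0 : 0 < (b : ℝ) + c := by linarith
  have hbc1 : 1 < (b : ℝ) + c := by linarith
  have hx0pos : 0 < x0 := by rw [hx0def]; positivity
  have hx0lt1 : x0 < 1 := by rw [hx0def, inv_lt_one_iff₀]; right; exact hbc1
  have hx1x0 : x1 < x0 := by
    rw [hx1def, hx0def]
    exact inv_strictAnti₀ hbc0 (by linarith)
  have hgx0 : 1 < g x0 := by
    have hP : ((b : ℝ) + c) ^ m0 < Q := by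
      rw [hQdef]
      exact pow_lt_pow_left₀ (by linarith) (le_of_lt hbc0) (by omega)
    have hcP : c * ((b : ℝ) + c) ^ m0 < (b : ℝ) := by
      have h2' : c * Q ≤ (b : ℝ) := by
        calc c * Q ≤ ((b : ℝ) / Q) * Q := by nlinarith
          _ = (b : ℝ) := by field_simp
      nlinarith
    have htwo : (b : ℝ) * x0 ^ (0 + 1) + (b : ℝ) * x0 ^ (m0 + 1) ≤ g x0 := by
      have hs := hgsum (le_of_lt hx0pos) hx0lt1
      have hst := Summable.sum_le_tsum ({0, m0} : Finset ℕ)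
        (fun i _ => mul_nonneg (hunn i) (pow_nonneg (le_of_lt hx0pos) _)) hs
      rw [Finset.sum_pair (by omega : (0 : ℕ) ≠ m0)] at hst
      rw [hgdef]
      have e0 : (u 0 : ℝ) = (b : ℝ) := by exact_mod_cast congrArg (Int.cast : ℤ → ℝ) hu0
      have em : (u m0 : ℝ) = (b : ℝ) := by
        rw [hudef]; exact_mod_cast congrArg (Int.cast : ℤ → ℝ) hm0b
      rw [e0, em] at hst
      exact hst
    have key : ((b : ℝ) + c) ^ (m0 + 1) < (b : ℝ) * ((b : ℝ) + c) ^ m0 + (b : ℝ) := by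
      rw [pow_succ]
      nlinarith
    have hx0bc : x0 * ((b : ℝ) + c) = 1 := by
      rw [hx0def]; exact inv_mul_cancel₀ (ne_of_gt hbc0)
    have hid : x0 ^ (m0 + 1) * ((b : ℝ) + c) ^ (m0 + 1) = 1 := by
      rw [← mul_pow, hx0bc, one_pow]
    have hid2 : x0 ^ (m0 + 1) * ((b : ℝ) + c) ^ m0 = x0 := by
      have e1 : x0 ^ (m0 + 1) * ((b : ℝ) + c) ^ m0 = (x0 * ((b : ℝ) + c)) ^ m0 * x0 := by
        rw [mul_pow, pow_succ]; ring
      rw [e1, hx0bc, one_pow, one_mul]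
    have hkk := mul_lt_mul_of_pos_left key (pow_pos hx0pos (m0 + 1))
    rw [show x0 ^ (m0 + 1) * ((b : ℝ) + c) ^ (m0 + 1) = 1 from hid] at hkk
    have hfinal : 1 < (b : ℝ) * x0 ^ (0 + 1) + (b : ℝ) * x0 ^ (m0 + 1) := by
      have e2 : (b : ℝ) * x0 ^ (0 + 1) + (b : ℝ) * x0 ^ (m0 + 1)
          = x0 ^ (m0 + 1) * ((b : ℝ) * ((b : ℝ) + c) ^ m0 + (b : ℝ)) := by
        rw [zero_add, pow_one]
        rw [mul_add, ← mul_assoc, mul_comm (x0 ^ (m0 + 1)) ((b : ℝ)), mul_assoc, hid2]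
      rw [e2]
      exact hkk
    linarith
  -- continuity of g on [x1, x0]
  have hcont : ContinuousOn g (Set.Icc x1 x0) := by
    have hsummax : Summable (fun n : ℕ => (b : ℝ) * x0 ^ (n + 1)) := by
      apply ((summable_geometric_of_lt_one (le_of_lt hx0pos) hx0lt1).mul_left
        ((b : ℝ) * x0)).congr
      intro n; ring
    have huni := tendstoUniformlyOn_tsum (f := fun n (x : ℝ) => (u n : ℝ) * x ^ (n + 1))
      hsummax (s := Set.Icc x1 x0) ?_
    · apply huni.continuousOn
      refine Filter.Eventually.frequently ?_
      filter_upwards with N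
      apply Continuous.continuousOn
      apply continuous_finset_sum
      intro i _
      exact continuous_const.mul (continuous_pow (i + 1))
    · intro n x hx
      obtain ⟨hxl, hxr⟩ := hx
      have h0x : 0 ≤ x := le_trans (le_of_lt hx1pos) hxl
      rw [Real.norm_eq_abs, abs_mul, abs_pow, abs_of_nonneg (hunn n), abs_of_nonneg h0x]
      have hple : x ^ (n + 1) ≤ x0 ^ (n + 1) := pow_le_pow_left₀ h0x hxr _
      nlinarith [hunn n, hule n, pow_nonneg h0x (n + 1)]
  -- IVT
  obtain ⟨x', hx'I, hgx'⟩ := intermediate_value_Icc (le_of_lt hx1x0) hcont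
    ⟨le_of_lt hgx1, le_of_lt hgx0⟩
  obtain ⟨hx'1, hx'0⟩ := hx'I
  have hx'lt0 : x' < x0 := lt_of_le_of_ne hx'0 (by rintro rfl; rw [hgx'] at hgx0; linarith)
  have hx'gt1 : x1 < x' := lt_of_le_of_ne hx'1 (by rintro rfl; rw [hgx'] at hgx1; linarith)
  have hx'pos : 0 < x' := lt_trans hx1pos hx'gt1
  have hx'lt1 : x' < 1 := lt_trans hx'lt0 hx0lt1
  have hx'ne : x' ≠ 0 := ne_of_gt hx'pos
  -- β
  obtain ⟨β, hβdef⟩ : ∃ y : ℝ, y = x'⁻¹ := ⟨_, rfl⟩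
  have hβpos : 0 < β := by rw [hβdef]; positivity
  have hβb : (b : ℝ) < β := by
    have h2' : x0⁻¹ < x'⁻¹ := inv_strictAnti₀ hx'pos hx'lt0
    have h3' : x0⁻¹ = (b : ℝ) + c := by rw [hx0def, inv_inv]
    rw [hβdef]
    linarith
  have hβb1 : β < (b : ℝ) + 1 := by
    have h2' : x'⁻¹ < x1⁻¹ := inv_strictAnti₀ hx1pos hx'gt1
    have h3' : x1⁻¹ = (b : ℝ) + 1 := by rw [hx1def, inv_inv]
    rw [hβdef]
    linarith
  -- tails
  obtain ⟨t, htdef⟩ : ∃ T : ℕ → ℝ,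
      T = fun m' => ∑' k : ℕ, (upperMechanical a b α (m' + k) : ℝ) * x' ^ (k + 1) := ⟨_, rfl⟩
  have ht_eq : ∀ m', t m' = ∑' k : ℕ, (upperMechanical a b α (m' + k) : ℝ) * x' ^ (k + 1) := by
    intro m'
    rw [htdef]
  have ht0 : t 0 = 1 := by
    have e : t 0 = g x' := by
      rw [ht_eq 0, hgdef, hudef]
      apply tsum_congr
      intro k
      rw [zero_add]
    rw [e, hgx']
  have htnn : ∀ m', 0 ≤ t m' := by
    intro m'
    rw [ht_eq m']
    exact tsum_nonneg (fun k => mul_nonneg (by exact_mod_cast hunn _)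
      (pow_nonneg (le_of_lt hx'pos) _))
  have htlt : ∀ m', 1 ≤ m' → t m' < 1 := by
    intro m' hm'
    have hlt := tail_lt ha hab hα h0 h1 hx'pos hx'lt1 hm'
    have e : ∑' k : ℕ, (upperMechanical a b α k : ℝ) * x' ^ (k + 1) = g x' := by
      rw [hgdef, hudef]
    rw [e, hgx'] at hlt
    rw [ht_eq m']
    exact hlt
  have hβx' : β * x' = 1 := by rw [hβdef]; exact inv_mul_cancel₀ hx'ne
  have hrec : ∀ m', β * t m' = (u m' : ℝ) + t (m' + 1) := by
    intro m'
    have hr := tail_rec ha hab (le_of_lt h0) (le_of_lt h1) (le_of_lt hx'pos) hx'lt1 m'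
    rw [← ht_eq m', ← ht_eq (m' + 1)] at hr
    rw [hudef, hr]
    linear_combination ((upperMechanical a b α m' : ℝ) + t (m' + 1)) * hβx'
  have hfloor : ∀ n, ⌊β * t n⌋ = u n := by
    intro n
    rw [hrec n]
    have h1' : (0 : ℝ) ≤ t (n + 1) := htnn _
    have h2' : t (n + 1) < 1 := htlt _ (by omega)
    rw [Int.floor_intCast_add, Int.floor_eq_zero_iff.mpr ⟨h1', h2'⟩, add_zero]
  have horbit : ∀ n, betaOrbit β n = t n := by
    intro n
    induction n with
    | zero => rw [ht0]; rfl
    | succ n ih =>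
      show β * betaOrbit β n - ((⌊β * betaOrbit β n⌋ : ℤ) : ℝ) = t (n + 1)
      rw [ih, hfloor n, hrec n]
      exact add_sub_cancel_left _ _
  have hdig : ∀ n : ℕ, ⌊β * betaOrbit β n⌋ = upperMechanical a b α n := by
    intro n
    rw [horbit n]
    exact hfloor n
  have hval : ∀ β' : ℝ, (b : ℝ) < β' → β' < (b : ℝ) + 1 →
      (∀ n : ℕ, ⌊β' * betaOrbit β' n⌋ = upperMechanical a b α n) → g (β'⁻¹) = 1 := by
    intro β' hβ'b hβ'b1 hd'
    have hts := digits_hasSum ha hab (le_of_lt h0) (le_of_lt h1) hβ'b hβ'b1 hd'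
    rw [← hts, hgdef]
    apply tsum_congr
    intro n
    rw [div_eq_mul_inv, inv_pow]
  have hboundi : ∀ γ : ℝ, (b : ℝ) < γ → 0 ≤ γ⁻¹ ∧ γ⁻¹ < 1 := by
    intro γ hγ
    have hγ1 : 1 < γ := lt_of_le_of_lt hbR hγ
    constructor
    · positivity
    · rw [inv_lt_one_iff₀]; right; exact hγ1
  refine ⟨⟨β, ⟨hβb, hβb1, hdig⟩, ?_⟩, ?_⟩
  · rintro β' ⟨hβ'b, hβ'b1, hd'⟩
    have h1' : g (β'⁻¹) = 1 := hval β' hβ'b hβ'b1 hd'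
    have h2' : g (β⁻¹) = 1 := hval β hβb hβb1 hdig
    by_contra hne
    have hinvne : β'⁻¹ ≠ β⁻¹ := fun hh => hne (inv_injective hh)
    rcases lt_or_gt_of_ne hinvne with hlt | hgt
    · have hcmp := hmono _ _ (hboundi β' hβ'b).1 hlt (hboundi β hβb).2
      rw [h1', h2'] at hcmp
      exact lt_irrefl 1 hcmp
    · have hcmp := hmono _ _ (hboundi β hβb).1 hgt (hboundi β' hβ'b).2
      rw [h1', h2'] at hcmp
      exact lt_irrefl 1 hcmp
  · intro β' hβ'b hβ'b1 hd'
    exact digits_hasSum ha hab (le_of_lt h0) (le_of_lt h1) hβ'b hβ'b1 hd'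
end

section
/- Let a, b be integers with 0 ≤ a < b, and let p, q be coprime integers with 0 < p < q. Define the finite digit word c(0), …, c(q−1) by c(0) = b, c(i) = a + (b − a)·(⌈(i+1)p/q⌉ − ⌈i·p/q⌉) for 1 ≤ i ≤ q−2, and c(q−1) = b (the word b·z_{p,q}·b over the alphabet {a,b}). Then there exists a unique β ∈ (b, b+1) whose greedy β-expansion of 1 is exactly this finite word: with r(0) = 1 and r(k+1) = β·r(k) − ⌊β·r(k)⌋ one has ⌊β·r(i)⌋ = c(i) for 0 ≤ i ≤ q−1 and r(q) = 0. -/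
/-- The finite word `b·z_{p,q}·b` over the alphabet `{a,b}`:
`c 0 = b`, `c i = a + (b−a)·(⌈(i+1)p/q⌉ − ⌈ip/q⌉)` for `1 ≤ i ≤ q−2`, `c (q−1) = b`. -/
def bCentralb (a b : ℤ) (p q : ℕ) (i : ℕ) : ℤ :=
  if i = 0 then b
  else if i + 1 = q then b
  else a + (b - a) * (⌈(((i : ℚ) + 1) * p) / q⌉ - ⌈((i : ℚ) * p) / q⌉)

namespace ChrisAux

/-- `F i = ⌈ i p / q ⌉`. -/
def F (p q : ℕ) (i : ℕ) : ℤ := ⌈((i : ℚ) * p) / q⌉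

variable {p q : ℕ}

lemma F_zero : F p q 0 = 0 := by simp [F]

lemma F_q (hq : 0 < q) : F p q q = p := by
  unfold F
  rw [mul_comm, mul_div_assoc, div_self (by exact_mod_cast hq.ne'), mul_one]
  exact Int.ceil_natCast p

lemma F_mono (hq : 0 < q) {i j : ℕ} (hij : i ≤ j) : F p q i ≤ F p q j := by
  apply Int.ceil_mono
  have h1 : ((i:ℚ)) ≤ j := by exact_mod_cast hij
  have h2 : (0:ℚ) ≤ p := by positivity
  have h3 : (0:ℚ) ≤ q := by positivity
  apply div_le_div_of_nonneg_right (by exact mul_le_mul_of_nonneg_right h1 h2) ?_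
  positivity

lemma F_succ_le (hpq : p ≤ q) (i : ℕ) : F p q (i + 1) ≤ F p q i + 1 := by
  have : (((i:ℕ)+1 : ℕ) : ℚ) * p / q = (i : ℚ) * p / q + (p : ℚ) / q := by
    push_cast; ring
  rw [F, this]
  calc ⌈(i : ℚ) * p / q + (p : ℚ) / q⌉ ≤ ⌈(i : ℚ) * p / q + 1⌉ := by
        apply Int.ceil_mono
        have : (p : ℚ) / q ≤ 1 := by
          rcases Nat.eq_zero_or_pos q with h | h
          · simp [h]
          · rw [div_le_one (by exact_mod_cast h)]; exact_mod_cast hpq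
        linarith
    _ = ⌈(i : ℚ) * p / q⌉ + 1 := Int.ceil_add_one _

lemma F_subadd (k i : ℕ) : F p q (k + i) ≤ F p q k + F p q i := by
  have h : (((k + i : ℕ)) : ℚ) * p / q = (k : ℚ) * p / q + (i : ℚ) * p / q := by
    push_cast; ring
  rw [F, h]
  refine Int.ceil_le.2 ?_
  push_cast
  have h1 := Int.le_ceil ((k : ℚ) * p / q)
  have h2 := Int.le_ceil ((i : ℚ) * p / q)
  exact add_le_add h1 h2

lemma F_superadd (k i : ℕ) : F p q k + F p q i ≤ F p q (k + i) + 1 := by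
  have h : (k : ℚ) * p / q = ((k + i : ℕ) : ℚ) * p / q + (-((i : ℚ) * p / q)) := by
    push_cast; ring
  have h1 : F p q k ≤ F p q (k + i) + (1 - F p q i) := by
    calc F p q k = ⌈((k + i : ℕ) : ℚ) * p / q + (-((i : ℚ) * p / q))⌉ := by rw [F, h]
      _ ≤ ⌈((k + i : ℕ) : ℚ) * p / q⌉ + ⌈-((i : ℚ) * p / q)⌉ := by
          refine Int.ceil_le.2 ?_
          push_cast
          exact add_le_add (Int.le_ceil _) (Int.le_ceil _)
      _ ≤ F p q (k + i) + (1 - F p q i) := by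
          rw [Int.ceil_neg]
          have := Int.ceil_le_floor_add_one ((i : ℚ) * p / q)
          have : -⌊(i : ℚ) * p / q⌋ ≤ 1 - F p q i := by unfold F; omega
          unfold F at *; omega
  omega

lemma not_int (hp : 0 < p) (hpq : p < q) (hcop : Nat.Coprime p q) {k : ℕ}
    (hk0 : 0 < k) (hkq : k < q) : (⌊(k : ℚ) * p / q⌋ : ℚ) < (k : ℚ) * p / q := by
  rcases lt_or_eq_of_le (Int.floor_le ((k : ℚ) * p / q)) with h | h
  · exact h
  · exfalso
    have hq : (0:ℚ) < q := by exact_mod_cast hpq.trans_le' hp.le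
    have : (k : ℚ) * p = (⌊(k : ℚ) * p / q⌋ : ℚ) * q := by
      field_simp at h ⊢
      linarith [h]
    have hz : (k * p : ℤ) = ⌊(k : ℚ) * p / q⌋ * q := by exact_mod_cast this
    have hdvd : (q : ℤ) ∣ (k : ℤ) * p := ⟨⌊(k : ℚ) * p / q⌋, by linarith [hz]⟩
    have hdvd' : q ∣ k * p := by exact_mod_cast hdvd
    have hqk : q ∣ k := (Nat.Coprime.dvd_of_dvd_mul_right (hcop.symm) hdvd')
    exact absurd (Nat.le_of_dvd hk0 hqk) (by omega)

lemma ceil_eq_floor_add_one (hp : 0 < p) (hpq : p < q) (hcop : Nat.Coprime p q) {k : ℕ}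
    (hk0 : 0 < k) (hkq : k < q) : F p q k = ⌊(k : ℚ) * p / q⌋ + 1 := by
  have h1 := not_int hp hpq hcop hk0 hkq
  have h2 : ⌊(k : ℚ) * p / q⌋ < F p q k := Int.lt_ceil.2 h1
  have h3 := Int.ceil_le_floor_add_one ((k : ℚ) * p / q)
  unfold F at *; omega

lemma F_add_compl (hp : 0 < p) (hpq : p < q) (hcop : Nat.Coprime p q) {k : ℕ}
    (hk0 : 0 < k) (hkq : k < q) : F p q (q - k) + F p q k = p + 1 := by
  have hq : 0 < q := hk0.trans hkq
  have hx : ((q - k : ℕ) : ℚ) * p / q = -((k : ℚ) * p / q) + (p:ℤ) := by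
    have hq' : (0:ℚ) < q := by exact_mod_cast hq
    have : ((q - k : ℕ) : ℚ) = (q : ℚ) - k := by
      push_cast [Nat.cast_sub hkq.le]; ring
    rw [this]; field_simp; push_cast; ring
  have : F p q (q - k) = -⌊(k : ℚ) * p / q⌋ + p := by
    rw [F, hx, Int.ceil_add_intCast, Int.ceil_neg]
  rw [this, ceil_eq_floor_add_one hp hpq hcop hk0 hkq]; ring

end ChrisAux

namespace ChrisAux

/-- letter of the upper Christoffel word -/
def t (p q : ℕ) (i : ℕ) : ℤ := F p q (i + 1) - F p q i

variable {p q : ℕ}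

lemma t_mem (hq : 0 < q) (hpq : p ≤ q) (i : ℕ) : t p q i = 0 ∨ t p q i = 1 := by
  have h1 := F_mono (p := p) hq (by omega : i ≤ i+1)
  have h2 := F_succ_le (p := p) hpq i
  unfold t; omega

lemma t_zero (hp : 0 < p) (hpq : p < q) : t p q 0 = 1 := by
  have hq : (0:ℚ) < q := by exact_mod_cast hp.trans hpq
  have hp' : (0:ℚ) < p := by exact_mod_cast hp
  unfold t F
  have hc : ((0 + 1 :ℕ) : ℚ) * p / q = (p:ℚ) / q := by push_cast; ring
  rw [hc]
  have h1 : (p:ℚ) / q ≤ ((1:ℤ):ℚ) := by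
    rw [show ((1:ℤ):ℚ) = 1 by norm_num, div_le_one hq]; exact_mod_cast hpq.le
  have h2 : ((0:ℤ):ℚ) < (p:ℚ) / q := by positivity
  have hle : ⌈(p:ℚ)/q⌉ ≤ 1 := Int.ceil_le.2 h1
  have hgt : (0:ℤ) < ⌈(p:ℚ)/q⌉ := Int.lt_ceil.2 h2
  have h0 : ((0:ℕ):ℚ) * p / q = 0 := by norm_num
  rw [h0]
  simp only [Int.ceil_zero]
  omega

/-- the first-drop lemma: for `1 ≤ k ≤ q-2` there is `j ≤ q-k-1` with
agreement before `j` and a strict drop at `j`. -/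
lemma first_drop (hp : 0 < p) (hpq : p < q) (hcop : Nat.Coprime p q) {k : ℕ}
    (hk0 : 0 < k) (hkq : k < q) :
    ∃ j : ℕ, j + k ≤ q - 1 ∧ (∀ i < j, t p q (k + i) = t p q i) ∧
      t p q (k + j) = t p q j - 1 := by
  have hq : 0 < q := hk0.trans hkq
  -- d n = F(k+n) - F k - F n ∈ {-1, 0}
  set P : ℕ → Prop := fun n => F p q (k + n) + 1 = F p q k + F p q n with hP
  have hdP : DecidablePred P := fun n => inferInstanceAs (Decidable _)
  have hPq : P (q - k) := by
    have h1 : k + (q - k) = q := by omega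
    have h2 := F_add_compl hp hpq hcop hk0 hkq
    have h3 := F_q (p := p) hq
    simp only [hP, h1, h3]
    omega
  have hex : ∃ n, P n := ⟨q - k, hPq⟩
  classical
  set j1 := Nat.find hex with hj1
  have hj1P : P j1 := Nat.find_spec hex
  have hj1le : j1 ≤ q - k := Nat.find_min' hex hPq
  have hj1pos : 0 < j1 := by
    rcases Nat.eq_zero_or_pos j1 with h | h
    · exfalso
      have := hj1P
      rw [h] at this
      simp only [hP, Nat.add_zero, F_zero] at this
      omega
    · exact h
  have hnd : ∀ i < j1, F p q (k + i) = F p q k + F p q i := by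
    intro i hi
    have h1 := F_subadd (p := p) (q := q) k i
    have h2 := F_superadd (p := p) (q := q) k i
    have h3 : ¬ P i := Nat.find_min hex hi
    simp only [hP] at h3
    omega
  refine ⟨j1 - 1, by omega, ?_, ?_⟩
  · intro i hi
    have e1 : F p q (k + i) = F p q k + F p q i := hnd i (by omega)
    have e2 : F p q (k + (i+1)) = F p q k + F p q (i+1) := hnd (i+1) (by omega)
    unfold t
    have : k + i + 1 = k + (i + 1) := by ring
    rw [this]; omega
  · have e1 : F p q (k + (j1 - 1)) = F p q k + F p q (j1 - 1) := hnd (j1-1) (by omega)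
    have e2 : F p q (k + j1) + 1 = F p q k + F p q j1 := hj1P
    unfold t
    have h1 : k + (j1 - 1) + 1 = k + j1 := by omega
    have h2 : j1 - 1 + 1 = j1 := by omega
    rw [h1, h2]; omega

end ChrisAux

namespace ChrisAux

variable {a b : ℤ} {p q : ℕ}

lemma c_eq (hab : a < b) (hp : 0 < p) (hpq : p < q) :
    ∀ i < q, bCentralb a b p q i = a + (b - a) * (if i + 1 = q then 1 else t p q i) := by
  have hq2 : 2 ≤ q := by omega
  intro i hi
  unfold bCentralb
  rcases Nat.eq_zero_or_pos i with h0 | h0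
  · subst h0
    rw [if_pos rfl, if_neg (by omega : ¬ (0+1 = q)), t_zero hp hpq]
    ring
  · rw [if_neg (by omega)]
    by_cases hlast : i + 1 = q
    · rw [if_pos hlast, if_pos hlast]; ring
    · rw [if_neg hlast, if_neg hlast]
      unfold t F
      congr 3
      push_cast
      ring

lemma c_bounds (ha : 0 ≤ a) (hab : a < b) (hp : 0 < p) (hpq : p < q) :
    ∀ i < q, a ≤ bCentralb a b p q i ∧ bCentralb a b p q i ≤ b := by
  intro i hi
  rw [c_eq hab hp hpq i hi]
  by_cases hlast : i + 1 = q
  · rw [if_pos hlast]; constructor <;> nlinarith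
  · rw [if_neg hlast]
    rcases t_mem (by omega) hpq.le i with h | h <;> rw [h] <;> constructor <;> nlinarith

lemma c_zero : bCentralb a b p q 0 = b := by simp [bCentralb]

lemma c_last (hq : 2 ≤ q) : bCentralb a b p q (q - 1) = b := by
  unfold bCentralb
  rw [if_neg (by omega), if_pos (by omega)]

/-- the key combinatorial comparison: each tail of the word is either
lexicographically dominated with a strict drop, or equals the prefix. -/
lemma comb (ha : 0 ≤ a) (hab : a < b) (hp : 0 < p) (hpq : p < q) (hcop : Nat.Coprime p q)
    {k : ℕ} (hk0 : 0 < k) (hkq : k < q) :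
    (∃ j, k + j + 1 < q ∧ (∀ i < j, bCentralb a b p q (k + i) = bCentralb a b p q i) ∧
        bCentralb a b p q (k + j) + 1 ≤ bCentralb a b p q j) ∨
    (∀ i, k + i < q → bCentralb a b p q (k + i) = bCentralb a b p q i) := by
  have hq2 : 2 ≤ q := by omega
  by_cases hk : k = q - 1
  · right
    intro i hiq
    have : i = 0 := by omega
    subst this; subst hk
    rw [Nat.add_zero, c_last hq2, c_zero]
  · -- 1 ≤ k ≤ q - 2
    obtain ⟨j, hjk, hagree, hdrop⟩ := first_drop hp hpq hcop hk0 hkq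
    have htj : t p q j = 1 ∧ t p q (k + j) = 0 := by
      rcases t_mem (by omega : 0 < q) hpq.le j with h | h <;>
        rcases t_mem (by omega : 0 < q) hpq.le (k + j) with h' | h' <;> omega
    have hagree' : ∀ i < j, bCentralb a b p q (k + i) = bCentralb a b p q i := by
      intro i hij
      rw [c_eq hab hp hpq (k+i) (by omega), c_eq hab hp hpq i (by omega)]
      rw [if_neg (by omega), if_neg (by omega), hagree i hij]
    by_cases hcase : k + j + 1 < q
    · left
      refine ⟨j, hcase, hagree', ?_⟩
      rw [c_eq hab hp hpq (k+j) (by omega), c_eq hab hp hpq j (by omega)]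
      rw [if_neg (by omega), if_neg (by omega), htj.1, htj.2]
      nlinarith
    · -- k + j + 1 = q : full agreement
      right
      have hkj : k + j + 1 = q := by omega
      intro i hiq
      rcases Nat.lt_or_ge i j with h | h
      · exact hagree' i h
      · have hij : i = j := by omega
        rw [hij]
        have h1 : k + j = q - 1 := by omega
        rw [h1, c_last hq2, c_eq hab hp hpq j (by omega), if_neg (by omega), htj.1]
        ring

end ChrisAux

namespace ChrisAux

/-- tail sums of the candidate expansion -/
noncomputable def S (a b : ℤ) (p q : ℕ) (β : ℝ) (k : ℕ) : ℝ :=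
  ∑ i ∈ Finset.range (q - k), (bCentralb a b p q (k + i) : ℝ) / β ^ (i + 1)

variable {a b : ℤ} {p q : ℕ} {β : ℝ}

lemma S_q : S a b p q β q = 0 := by simp [S]

lemma S_rec (hβ : β ≠ 0) {k : ℕ} (hk : k < q) :
    β * S a b p q β k = (bCentralb a b p q k : ℝ) + S a b p q β (k + 1) := by
  have h1 : q - k = (q - (k + 1)) + 1 := by omega
  rw [S, h1, Finset.sum_range_succ', mul_add, Finset.mul_sum]
  have h2 : ∀ i, β * ((bCentralb a b p q (k + (i + 1)) : ℝ) / β ^ (i + 1 + 1))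
      = (bCentralb a b p q ((k + 1) + i) : ℝ) / β ^ (i + 1) := by
    intro i
    rw [show k + (i + 1) = (k + 1) + i by ring, pow_succ]
    field_simp
  simp only [h2]
  rw [S]
  have h3 : β * ((bCentralb a b p q (k + 0) : ℝ) / β ^ (0 + 1)) = (bCentralb a b p q k : ℝ) := by
    field_simp
    simp
  rw [h3]
  ring

lemma S_nonneg (ha : 0 ≤ a) (hab : a < b) (hp : 0 < p) (hpq : p < q) (hβ : 0 < β) (k : ℕ) :
    0 ≤ S a b p q β k := by
  apply Finset.sum_nonneg
  intro i hi
  have hiq : k + i < q := by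
    have := Finset.mem_range.1 hi; omega
  have := (c_bounds ha hab hp hpq (k + i) hiq).1
  have h0 : (0:ℝ) ≤ (bCentralb a b p q (k + i) : ℝ) := by exact_mod_cast ha.trans this
  positivity

lemma S_pos (ha : 0 ≤ a) (hab : a < b) (hp : 0 < p) (hpq : p < q) (hβ : 0 < β)
    {k : ℕ} (hk : k < q) : 0 < S a b p q β k := by
  have hq2 : 2 ≤ q := by omega
  apply Finset.sum_pos'
  · intro i hi
    have hiq : k + i < q := by have := Finset.mem_range.1 hi; omega
    have := (c_bounds ha hab hp hpq (k + i) hiq).1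
    have h0 : (0:ℝ) ≤ (bCentralb a b p q (k + i) : ℝ) := by exact_mod_cast ha.trans this
    positivity
  · refine ⟨q - k - 1, Finset.mem_range.2 (by omega), ?_⟩
    have h1 : k + (q - k - 1) = q - 1 := by omega
    rw [h1, c_last hq2]
    have hb0 : (0:ℝ) < (b:ℝ) := by exact_mod_cast ha.trans_lt hab
    positivity

lemma S_split (hβ : β ≠ 0) {k m : ℕ} (hkm : k + m ≤ q) :
    S a b p q β k = (∑ i ∈ Finset.range m, (bCentralb a b p q (k + i) : ℝ) / β ^ (i + 1))
      + S a b p q β (k + m) / β ^ m := by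
  induction m with
  | zero => simp
  | succ m ih =>
    have hkm' : k + m ≤ q := by omega
    rw [ih hkm', Finset.sum_range_succ]
    have hrec := S_rec (a := a) (b := b) (p := p) (q := q) hβ (show k + m < q by omega)
    have hpow : (β : ℝ) ^ m ≠ 0 := pow_ne_zero _ hβ
    have hS : S a b p q β (k + m) = ((bCentralb a b p q (k + m) : ℝ) + S a b p q β (k + m + 1)) / β := by
      field_simp at hrec ⊢
      linarith [hrec]
    rw [hS, show k + (m + 1) = k + m + 1 by ring, pow_succ]
    field_simp
    ring

lemma S_lt_one (ha : 0 ≤ a) (hab : a < b) (hp : 0 < p) (hpq : p < q)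
    (hcop : Nat.Coprime p q) (hβ : 1 < β) (h0 : S a b p q β 0 = 1) :
    ∀ k, 0 < k → k ≤ q → S a b p q β k < 1 := by
  have hβ0 : (0:ℝ) < β := by linarith
  have hβ0' : β ≠ 0 := ne_of_gt hβ0
  suffices H : ∀ n k, q - k ≤ n → 0 < k → k ≤ q → S a b p q β k < 1 by
    intro k hk1 hk2; exact H (q - k) k le_rfl hk1 hk2
  intro n
  induction n with
  | zero =>
    intro k hn hk1 hk2
    have : k = q := by omega
    rw [this, S_q]; norm_num
  | succ n ih =>
    intro k hn hk1 hk2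
    rcases Nat.eq_or_lt_of_le hk2 with h | hkq
    · rw [h, S_q]; norm_num
    rcases comb ha hab hp hpq hcop hk1 hkq with ⟨j, hj, hagree, hdrop⟩ | hfull
    · -- strict drop at j
      have hs1 : S a b p q β k = (∑ i ∈ Finset.range j, (bCentralb a b p q (k + i) : ℝ) / β ^ (i + 1))
            + (bCentralb a b p q (k + j) : ℝ) / β ^ (j + 1) + S a b p q β (k + (j + 1)) / β ^ (j + 1) := by
        rw [S_split hβ0' (show k + (j + 1) ≤ q by omega), Finset.sum_range_succ]
      have hs0 : (1:ℝ) = (∑ i ∈ Finset.range j, (bCentralb a b p q (0 + i) : ℝ) / β ^ (i + 1))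
            + (bCentralb a b p q (0 + j) : ℝ) / β ^ (j + 1) + S a b p q β (0 + (j + 1)) / β ^ (j + 1) := by
        rw [← h0, S_split hβ0' (show 0 + (j + 1) ≤ q by omega), Finset.sum_range_succ]
      have hsum_eq : (∑ i ∈ Finset.range j, (bCentralb a b p q (k + i) : ℝ) / β ^ (i + 1))
          = ∑ i ∈ Finset.range j, (bCentralb a b p q (0 + i) : ℝ) / β ^ (i + 1) := by
        apply Finset.sum_congr rfl
        intro i hi
        rw [hagree i (Finset.mem_range.1 hi), Nat.zero_add]
      have hIH : S a b p q β (k + (j + 1)) < 1 := by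
        apply ih (k + (j + 1)) (by omega) (by omega) (by omega)
      have hS0 : 0 ≤ S a b p q β (0 + (j + 1)) := S_nonneg ha hab hp hpq hβ0 _
      have hdrop' : (bCentralb a b p q (k + j) : ℝ) + 1 ≤ (bCentralb a b p q (0 + j) : ℝ) := by
        rw [Nat.zero_add]; exact_mod_cast hdrop
      have hpow : (0:ℝ) < β ^ (j + 1) := by positivity
      rw [hs1, hsum_eq]
      rw [hs0]
      have key : (bCentralb a b p q (k + j) : ℝ) / β ^ (j + 1) + S a b p q β (k + (j + 1)) / β ^ (j + 1)
          < (bCentralb a b p q (0 + j) : ℝ) / β ^ (j + 1) + S a b p q β (0 + (j + 1)) / β ^ (j + 1) := by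
        rw [← add_div, ← add_div]
        exact (div_lt_div_iff_of_pos_right hpow).2 (by linarith)
      linarith [key]
    · -- full agreement
      have hs1 : S a b p q β k = (∑ i ∈ Finset.range (q - k), (bCentralb a b p q (k + i) : ℝ) / β ^ (i + 1))
            + S a b p q β q / β ^ (q - k) := by
        rw [S_split hβ0' (show k + (q - k) ≤ q by omega), show k + (q - k) = q by omega]
      have hs0 : (1:ℝ) = (∑ i ∈ Finset.range (q - k), (bCentralb a b p q (0 + i) : ℝ) / β ^ (i + 1))
            + S a b p q β (0 + (q - k)) / β ^ (q - k) := by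
        rw [← h0, S_split hβ0' (show 0 + (q - k) ≤ q by omega)]
      have hsum_eq : (∑ i ∈ Finset.range (q - k), (bCentralb a b p q (k + i) : ℝ) / β ^ (i + 1))
          = ∑ i ∈ Finset.range (q - k), (bCentralb a b p q (0 + i) : ℝ) / β ^ (i + 1) := by
        apply Finset.sum_congr rfl
        intro i hi
        rw [hfull i (by have := Finset.mem_range.1 hi; omega), Nat.zero_add]
      have hpos : 0 < S a b p q β (0 + (q - k)) := by
        apply S_pos ha hab hp hpq hβ0 (by omega)
      have hpow : (0:ℝ) < β ^ (q - k) := by positivity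
      rw [hs1, hsum_eq, S_q, hs0, zero_div]
      have : 0 < S a b p q β (0 + (q - k)) / β ^ (q - k) := by positivity
      linarith

end ChrisAux

namespace ChrisAux

variable {a b : ℤ} {p q : ℕ}

lemma S0_strictAnti (ha : 0 ≤ a) (hab : a < b) (hp : 0 < p) (hpq : p < q)
    {x y : ℝ} (hx : 0 < x) (hxy : x < y) : S a b p q y 0 < S a b p q x 0 := by
  have hq : 0 < q := by omega
  have hy : (0:ℝ) < y := hx.trans hxy
  apply Finset.sum_lt_sum
  · intro i hi
    have hiq : 0 + i < q := by have := Finset.mem_range.1 hi; omega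
    have hc := (c_bounds ha hab hp hpq (0 + i) hiq).1
    have h0 : (0:ℝ) ≤ (bCentralb a b p q (0 + i) : ℝ) := by exact_mod_cast ha.trans hc
    gcongr
  · refine ⟨0, Finset.mem_range.2 hq, ?_⟩
    rw [Nat.add_zero, c_zero]
    have hb0 : (0:ℝ) < (b:ℝ) := by exact_mod_cast ha.trans_lt hab
    simp only [zero_add, pow_one]
    exact div_lt_div_of_pos_left hb0 hx hxy

lemma S0_at_b (ha : 0 ≤ a) (hab : a < b) (hp : 0 < p) (hpq : p < q) :
    1 < S a b p q ((b:ℝ)) 0 := by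
  have hq2 : 2 ≤ q := by omega
  have hb0 : (0:ℝ) < (b:ℝ) := by exact_mod_cast ha.trans_lt hab
  have key : (bCentralb a b p q (0 + 0) : ℝ) / (b:ℝ) ^ (0 + 1)
      < ∑ i ∈ Finset.range q, (bCentralb a b p q (0 + i) : ℝ) / (b:ℝ) ^ (i + 1) := by
    refine Finset.single_lt_sum
      (f := fun i => (bCentralb a b p q (0 + i) : ℝ) / (b:ℝ) ^ (i + 1))
      (i := 0) (j := q - 1) (show q - 1 ≠ 0 by omega) (Finset.mem_range.2 (by omega))
      (Finset.mem_range.2 (by omega)) ?_ ?_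
    · rw [show 0 + (q - 1) = q - 1 by omega, c_last hq2]
      positivity
    · intro i hi _
      have hiq : 0 + i < q := by have := Finset.mem_range.1 hi; omega
      have hc := (c_bounds ha hab hp hpq (0 + i) hiq).1
      have h0 : (0:ℝ) ≤ (bCentralb a b p q (0 + i) : ℝ) := by exact_mod_cast ha.trans hc
      positivity
  have h1 : (bCentralb a b p q (0 + 0) : ℝ) / (b:ℝ) ^ (0 + 1) = 1 := by
    rw [Nat.add_zero, c_zero, pow_one, div_self hb0.ne']
  rw [← h1]
  exact key

lemma geom_aux (hb0 : (0:ℝ) < (b:ℝ)) :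
    ∀ n : ℕ, (b:ℝ) * ∑ i ∈ Finset.range n, (((b:ℝ) + 1)⁻¹) ^ (i + 1) = 1 - (((b:ℝ) + 1)⁻¹) ^ n := by
  set r : ℝ := ((b:ℝ) + 1)⁻¹ with hr
  have hb1 : (0:ℝ) < (b:ℝ) + 1 := by linarith
  have hrb : 1 - r = (b:ℝ) * r := by
    rw [hr]; field_simp; ring
  intro n
  induction n with
  | zero => simp
  | succ n ih =>
    rw [Finset.sum_range_succ, mul_add, ih, pow_succ]
    nlinarith [pow_nonneg (le_of_lt (show (0:ℝ) < r by rw [hr]; positivity)) n]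

lemma S0_at_b1 (ha : 0 ≤ a) (hab : a < b) (hp : 0 < p) (hpq : p < q) :
    S a b p q ((b:ℝ) + 1) 0 < 1 := by
  have hq : 0 < q := by omega
  have hb0 : (0:ℝ) < (b:ℝ) := by exact_mod_cast ha.trans_lt hab
  have hb1 : (0:ℝ) < (b:ℝ) + 1 := by linarith
  have hle : S a b p q ((b:ℝ) + 1) 0 ≤ ∑ i ∈ Finset.range q, (b:ℝ) * (((b:ℝ) + 1)⁻¹) ^ (i + 1) := by
    apply Finset.sum_le_sum
    intro i hi
    have hiq : 0 + i < q := by have := Finset.mem_range.1 hi; omega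
    have hc := (c_bounds ha hab hp hpq (0 + i) hiq).2
    have hcr : ((bCentralb a b p q (0 + i)) : ℝ) ≤ (b:ℝ) := by exact_mod_cast hc
    rw [inv_pow, div_eq_mul_inv]
    gcongr
  have := geom_aux (b := b) hb0 q
  rw [← Finset.mul_sum] at hle
  have hrq : (0:ℝ) < (((b:ℝ) + 1)⁻¹) ^ q := by positivity
  linarith

lemma S0_continuousOn (hq : 0 < q) (hb0 : (0:ℝ) < (b:ℝ)) :
    ContinuousOn (fun β : ℝ => S a b p q β 0) (Set.Icc ((b:ℝ)) ((b:ℝ) + 1)) := by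
  apply continuousOn_finset_sum
  intro i _
  apply ContinuousOn.div continuousOn_const
  · exact (continuousOn_pow (i + 1))
  · intro x hx
    have : (0:ℝ) < x := lt_of_lt_of_le hb0 hx.1
    positivity

/-- existence of the root in the open interval -/
lemma exists_root (ha : 0 ≤ a) (hab : a < b) (hp : 0 < p) (hpq : p < q) :
    ∃ β : ℝ, (b:ℝ) < β ∧ β < (b:ℝ) + 1 ∧ S a b p q β 0 = 1 := by
  have hq : 0 < q := by omega
  have hb0 : (0:ℝ) < (b:ℝ) := by exact_mod_cast ha.trans_lt hab
  have hc := S0_continuousOn (a := a) (p := p) hq hb0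
  have hsub := intermediate_value_Icc' (show (b:ℝ) ≤ (b:ℝ) + 1 by linarith) hc
  have h1 : (1:ℝ) ∈ Set.Icc (S a b p q ((b:ℝ) + 1) 0) (S a b p q ((b:ℝ)) 0) :=
    ⟨(S0_at_b1 ha hab hp hpq).le, (S0_at_b ha hab hp hpq).le⟩
  obtain ⟨β, hβmem, hβeq'⟩ := hsub h1
  have hβeq : S a b p q β 0 = 1 := hβeq'
  refine ⟨β, ?_, ?_, hβeq⟩
  · rcases lt_or_eq_of_le hβmem.1 with h | h
    · exact h
    · exfalso; rw [← h] at hβeq; have := S0_at_b (p := p) (q := q) ha hab hp hpq; rw [hβeq] at this; norm_num at this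
  · rcases lt_or_eq_of_le hβmem.2 with h | h
    · exact h
    · exfalso; rw [h] at hβeq; have := S0_at_b1 (p := p) (q := q) ha hab hp hpq; rw [hβeq] at this; norm_num at this

/-- at the root, the greedy orbit is given by the tail sums and the digits are `c`. -/
lemma orbit_eq (ha : 0 ≤ a) (hab : a < b) (hp : 0 < p) (hpq : p < q) (hcop : Nat.Coprime p q)
    {β : ℝ} (hb1 : (b:ℝ) < β) (hb2 : β < (b:ℝ) + 1) (h0 : S a b p q β 0 = 1) :
    ∀ k, k ≤ q → betaOrbit β k = S a b p q β k := by
  have hb0 : (1:ℝ) ≤ (b:ℝ) := by exact_mod_cast ha.trans_lt hab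
  have hβ1 : (1:ℝ) < β := lt_of_le_of_lt hb0 hb1
  have hβ0 : (0:ℝ) < β := by linarith
  intro k
  induction k with
  | zero => intro _; rw [show betaOrbit β 0 = 1 from rfl, h0]
  | succ k ih =>
    intro hk
    have hkq : k < q := by omega
    have hS : betaOrbit β k = S a b p q β k := ih (by omega)
    have hrec := S_rec (a := a) (b := b) (p := p) (q := q) (ne_of_gt hβ0) hkq
    have hfrac1 : 0 ≤ S a b p q β (k + 1) := S_nonneg ha hab hp hpq hβ0 _
    have hfrac2 : S a b p q β (k + 1) < 1 :=
      S_lt_one ha hab hp hpq hcop hβ1 h0 (k + 1) (by omega) (by omega)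
    have hfl : ⌊β * S a b p q β k⌋ = bCentralb a b p q k := by
      rw [hrec, add_comm, Int.floor_add_intCast, Int.floor_eq_zero_iff.2 ⟨hfrac1, hfrac2⟩, zero_add]
    show β * betaOrbit β k - ↑⌊β * betaOrbit β k⌋ = _
    rw [hS, hfl, hrec]
    push_cast
    ring

/-- digits of the orbit at the root -/
lemma orbit_digits (ha : 0 ≤ a) (hab : a < b) (hp : 0 < p) (hpq : p < q) (hcop : Nat.Coprime p q)
    {β : ℝ} (hb1 : (b:ℝ) < β) (hb2 : β < (b:ℝ) + 1) (h0 : S a b p q β 0 = 1) :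
    ∀ i, i < q → ⌊β * betaOrbit β i⌋ = bCentralb a b p q i := by
  have hb0 : (1:ℝ) ≤ (b:ℝ) := by exact_mod_cast ha.trans_lt hab
  have hβ1 : (1:ℝ) < β := lt_of_le_of_lt hb0 hb1
  have hβ0 : (0:ℝ) < β := by linarith
  intro i hi
  rw [orbit_eq ha hab hp hpq hcop hb1 hb2 h0 i hi.le]
  have hrec := S_rec (a := a) (b := b) (p := p) (q := q) (ne_of_gt hβ0) hi
  have hfrac1 : 0 ≤ S a b p q β (i + 1) := S_nonneg ha hab hp hpq hβ0 _
  have hfrac2 : S a b p q β (i + 1) < 1 :=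
    S_lt_one ha hab hp hpq hcop hβ1 h0 (i + 1) (by omega) (by omega)
  rw [hrec, add_comm, Int.floor_add_intCast, Int.floor_eq_zero_iff.2 ⟨hfrac1, hfrac2⟩, zero_add]

/-- any β satisfying the expansion conditions is a root of `S _ 0 = 1`. -/
lemma root_of_conditions (ha : 0 ≤ a) (hab : a < b) (hp : 0 < p) (hpq : p < q)
    {β : ℝ} (hb1 : (b:ℝ) < β)
    (hdig : ∀ i : ℕ, i < q → ⌊β * betaOrbit β i⌋ = bCentralb a b p q i)
    (hend : betaOrbit β q = 0) : S a b p q β 0 = 1 := by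
  have hb0 : (1:ℝ) ≤ (b:ℝ) := by exact_mod_cast ha.trans_lt hab
  have hβ0 : (0:ℝ) < β := by linarith
  have key : ∀ k, k ≤ q → betaOrbit β k
      = β ^ k * (1 - ∑ i ∈ Finset.range k, (bCentralb a b p q i : ℝ) / β ^ (i + 1)) := by
    intro k
    induction k with
    | zero => intro _; simp [betaOrbit]
    | succ k ih =>
      intro hk
      have hkq : k < q := by omega
      have hS := ih (by omega)
      show β * betaOrbit β k - ↑⌊β * betaOrbit β k⌋ = _
      rw [hdig k hkq, hS, Finset.sum_range_succ]
      have hpk : β ^ (k + 1) ≠ 0 := pow_ne_zero _ (ne_of_gt hβ0)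
      field_simp
      ring
  have h := key q le_rfl
  rw [hend] at h
  have hpq0 : β ^ q ≠ 0 := pow_ne_zero _ (ne_of_gt hβ0)
  have h2 : 1 - ∑ i ∈ Finset.range q, (bCentralb a b p q i : ℝ) / β ^ (i + 1) = 0 := by
    rcases mul_eq_zero.1 h.symm with h' | h'
    · exact absurd h' hpq0
    · exact h'
  have h3 : S a b p q β 0 = ∑ i ∈ Finset.range q, (bCentralb a b p q i : ℝ) / β ^ (i + 1) := by
    rw [S]
    simp
  rw [h3]
  linarith

end ChrisAux

/-- For integers `0 ≤ a < b` and coprime `0 < p < q`, there is a unique `β ∈ (b, b+1)`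
whose greedy β-expansion of 1 is exactly the finite word `b z_{p,q} b`. -/
theorem exists_unique_lower_self_christoffel (a b : ℤ) (ha : 0 ≤ a) (hab : a < b)
    (p q : ℕ) (hp : 0 < p) (hpq : p < q) (hcop : Nat.Coprime p q) :
    ∃! β : ℝ, (b : ℝ) < β ∧ β < (b : ℝ) + 1 ∧
      (∀ i : ℕ, i < q → ⌊β * betaOrbit β i⌋ = bCentralb a b p q i) ∧
      betaOrbit β q = 0 := by
  classical
  obtain ⟨β, hb1, hb2, hroot⟩ := ChrisAux.exists_root ha hab hp hpq
  have hb0 : (1:ℝ) ≤ (b:ℝ) := by exact_mod_cast ha.trans_lt hab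
  refine ⟨β, ⟨hb1, hb2, ?_, ?_⟩, ?_⟩
  · exact ChrisAux.orbit_digits ha hab hp hpq hcop hb1 hb2 hroot
  · rw [ChrisAux.orbit_eq ha hab hp hpq hcop hb1 hb2 hroot q le_rfl, ChrisAux.S_q]
  · rintro y ⟨hy1, hy2, hydig, hyend⟩
    have hyroot : ChrisAux.S a b p q y 0 = 1 :=
      ChrisAux.root_of_conditions ha hab hp hpq hy1 hydig hyend
    by_contra hne
    rcases lt_or_gt_of_ne hne with h | h
    · have := ChrisAux.S0_strictAnti (p := p) (q := q) ha hab hp hpq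
        (show (0:ℝ) < y by linarith) h
      rw [hyroot, hroot] at this; norm_num at this
    · have := ChrisAux.S0_strictAnti (p := p) (q := q) ha hab hp hpq
        (show (0:ℝ) < β by linarith) h
      rw [hyroot, hroot] at this; norm_num at this
end

section
/- Let M > 0 and let (a_n)_{n≥1} be a real sequence with a_1 ≥ 1, 0 ≤ a_n ≤ M for all n, and (a_n) not equal to the sequence (1, 0, 0, …). Let ζ ∈ (0,1) satisfy 1 = ∑_{n=1}^∞ a_n ζ^n. For each m ≥ 1 let (b_{m,n})_{n≥1} be a real sequence with 0 ≤ b_{m,n} ≤ M for all n and b_{m,i} = a_i for 1 ≤ i ≤ m, and let ζ_m ∈ (0,1) satisfy 1 = ∑_{n=1}^∞ b_{m,n} ζ_m^n. Then lim_{m→∞} ζ_m = ζ; moreover |ζ_m − ζ| ≤ M·(ζ^{m+1}/(1−ζ) + ζ_m^{m+1}/(1−ζ_m)) for every m. -/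
open Filter

private lemma summable_aux {M x : ℝ} (c : ℕ → ℝ)
    (hb : ∀ n : ℕ, 1 ≤ n → 0 ≤ c n ∧ c n ≤ M) (h0 : 0 ≤ x) (h1 : x < 1) :
    Summable (fun n : ℕ => c (n + 1) * x ^ (n + 1)) := by
  apply Summable.of_nonneg_of_le
    (fun n => mul_nonneg (hb (n + 1) (by omega)).1 (pow_nonneg h0 _))
    (fun n => mul_le_mul_of_nonneg_right (hb (n + 1) (by omega)).2 (pow_nonneg h0 _))
  exact (summable_nat_add_iff 1).2 ((summable_geometric_of_lt_one h0 h1).mul_left M)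

private lemma tail_bound {M x : ℝ} (c : ℕ → ℝ)
    (hb : ∀ n : ℕ, 1 ≤ n → 0 ≤ c n ∧ c n ≤ M) (h0 : 0 ≤ x) (h1 : x < 1) (m : ℕ) :
    ∑' n : ℕ, c (n + m + 1) * x ^ (n + m + 1) ≤ M * (x ^ (m + 1) / (1 - x)) := by
  have hsum : Summable (fun n : ℕ => M * x ^ (m + 1) * x ^ n) :=
    (summable_geometric_of_lt_one h0 h1).mul_left _
  have htail : Summable (fun n : ℕ => c (n + m + 1) * x ^ (n + m + 1)) := by
    have := (summable_nat_add_iff (f := fun n => c (n + 1) * x ^ (n + 1)) m).2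
      (summable_aux c hb h0 h1)
    simpa using this
  calc ∑' n : ℕ, c (n + m + 1) * x ^ (n + m + 1)
      ≤ ∑' n : ℕ, M * x ^ (m + 1) * x ^ n := by
        refine Summable.tsum_le_tsum (fun n => ?_) htail hsum
        calc c (n + m + 1) * x ^ (n + m + 1) ≤ M * x ^ (n + m + 1) :=
              mul_le_mul_of_nonneg_right (hb (n + m + 1) (by omega)).2 (pow_nonneg h0 _)
          _ = M * x ^ (m + 1) * x ^ n := by ring
    _ = M * x ^ (m + 1) * (1 - x)⁻¹ := by rw [tsum_mul_left, tsum_geometric_of_lt_one h0 h1]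
    _ = M * (x ^ (m + 1) / (1 - x)) := by ring

/-- If `1 = ∑ aₙ ζⁿ` and `1 = ∑ b_{m,n} ζₘⁿ` with bounded nonnegative coefficients agreeing
up to index `m`, then `ζₘ → ζ`, with the explicit bound
`|ζₘ − ζ| ≤ M(ζ^{m+1}/(1−ζ) + ζₘ^{m+1}/(1−ζₘ))`. -/
theorem tendsto_root_of_agreeing_coefficients
    (M : ℝ) (hM : 0 < M)
    (a : ℕ → ℝ) (ha1 : 1 ≤ a 1)
    (habd : ∀ n : ℕ, 1 ≤ n → 0 ≤ a n ∧ a n ≤ M)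
    (hane : ¬ (a 1 = 1 ∧ ∀ n : ℕ, 2 ≤ n → a n = 0))
    (ζ : ℝ) (hζ0 : 0 < ζ) (hζ1 : ζ < 1)
    (hζ : 1 = ∑' n : ℕ, a (n + 1) * ζ ^ (n + 1))
    (b : ℕ → ℕ → ℝ) (ζm : ℕ → ℝ)
    (hbbd : ∀ m n : ℕ, 1 ≤ m → 1 ≤ n → 0 ≤ b m n ∧ b m n ≤ M)
    (hba : ∀ m : ℕ, 1 ≤ m → ∀ i : ℕ, 1 ≤ i → i ≤ m → b m i = a i)
    (hζm0 : ∀ m : ℕ, 1 ≤ m → 0 < ζm m) (hζm1 : ∀ m : ℕ, 1 ≤ m → ζm m < 1)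
    (hζms : ∀ m : ℕ, 1 ≤ m → 1 = ∑' n : ℕ, b m (n + 1) * (ζm m) ^ (n + 1)) :
    Tendsto ζm atTop (nhds ζ) ∧
    ∀ m : ℕ, 1 ≤ m →
      |ζm m - ζ| ≤ M * (ζ ^ (m + 1) / (1 - ζ) + (ζm m) ^ (m + 1) / (1 - ζm m)) := by
  have hsa : Summable (fun n : ℕ => a (n + 1) * ζ ^ (n + 1)) :=
    summable_aux a habd hζ0.le hζ1
  have hsb : ∀ m : ℕ, 1 ≤ m →
      Summable (fun n : ℕ => b m (n + 1) * (ζm m) ^ (n + 1)) := fun m hm =>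
    summable_aux (b m) (fun n hn => hbbd m n hm hn) (hζm0 m hm).le (hζm1 m hm)
  -- the key explicit bound
  have key : ∀ m : ℕ, 1 ≤ m →
      |ζm m - ζ| ≤ M * (ζ ^ (m + 1) / (1 - ζ) + (ζm m) ^ (m + 1) / (1 - ζm m)) := by
    intro m hm
    have hz0 := hζm0 m hm
    have hz1 := hζm1 m hm
    set Ta : ℝ := ∑' n : ℕ, a (n + m + 1) * ζ ^ (n + m + 1) with hTa_def
    set Tb : ℝ := ∑' n : ℕ, b m (n + m + 1) * (ζm m) ^ (n + m + 1) with hTb_def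
    have hTa0 : 0 ≤ Ta := tsum_nonneg fun n =>
      mul_nonneg (habd _ (by omega)).1 (pow_nonneg hζ0.le _)
    have hTb0 : 0 ≤ Tb := tsum_nonneg fun n =>
      mul_nonneg (hbbd m _ hm (by omega)).1 (pow_nonneg hz0.le _)
    have hTa_le : Ta ≤ M * (ζ ^ (m + 1) / (1 - ζ)) := tail_bound a habd hζ0.le hζ1 m
    have hTb_le : Tb ≤ M * ((ζm m) ^ (m + 1) / (1 - ζm m)) :=
      tail_bound (b m) (fun n hn => hbbd m n hm hn) hz0.le hz1 m
    have hA : (∑ i ∈ Finset.range m, a (i + 1) * ζ ^ (i + 1)) + Ta = 1 := by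
      rw [hζ]
      have := Summable.sum_add_tsum_nat_add m hsa
      simpa [add_right_comm] using this
    have hB : (∑ i ∈ Finset.range m, a (i + 1) * (ζm m) ^ (i + 1)) + Tb = 1 := by
      rw [hζms m hm]
      have := Summable.sum_add_tsum_nat_add m (hsb m hm)
      have hsum_eq : (∑ i ∈ Finset.range m, b m (i + 1) * (ζm m) ^ (i + 1)) =
          ∑ i ∈ Finset.range m, a (i + 1) * (ζm m) ^ (i + 1) := by
        refine Finset.sum_congr rfl fun i hi => ?_
        rw [hba m hm (i + 1) (by omega) (by exact Finset.mem_range.mp hi)]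
      rw [← hsum_eq]
      simpa [add_right_comm] using this
    have hD : (∑ i ∈ Finset.range m, a (i + 1) * (ζ ^ (i + 1) - (ζm m) ^ (i + 1)))
        = Tb - Ta := by
      have := hA.trans hB.symm
      rw [Finset.sum_congr rfl fun i _ => mul_sub (a (i + 1)) _ _, Finset.sum_sub_distrib]
      linarith
    have h0mem : (0 : ℕ) ∈ Finset.range m := Finset.mem_range.mpr (by omega)
    rcases le_total (ζm m) ζ with h | h
    · -- D ≥ ζ - ζm ≥ 0
      have hterm : ∀ i ∈ Finset.range m,
          0 ≤ a (i + 1) * (ζ ^ (i + 1) - (ζm m) ^ (i + 1)) := fun i _ =>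
        mul_nonneg (habd _ (by omega)).1
          (sub_nonneg.2 (pow_le_pow_left₀ hz0.le h _))
      have hsingle := Finset.single_le_sum hterm h0mem
      have h1le : ζ - ζm m ≤ a 1 * (ζ ^ 1 - (ζm m) ^ 1) := by
        have : 0 ≤ ζ - ζm m := sub_nonneg.2 h
        nlinarith
      have habs : |ζm m - ζ| = ζ - ζm m := by
        rw [abs_sub_comm, abs_of_nonneg (sub_nonneg.2 h)]
      rw [habs]
      have hMζ : 0 ≤ M * (ζ ^ (m + 1) / (1 - ζ)) :=
        mul_nonneg hM.le (div_nonneg (pow_nonneg hζ0.le _) (by linarith))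
      have : ζ - ζm m ≤ Tb - Ta := by
        calc ζ - ζm m ≤ a 1 * (ζ ^ 1 - (ζm m) ^ 1) := h1le
          _ ≤ ∑ i ∈ Finset.range m, a (i + 1) * (ζ ^ (i + 1) - (ζm m) ^ (i + 1)) := by
              simpa using hsingle
          _ = Tb - Ta := hD
      calc ζ - ζm m ≤ Tb - Ta := this
        _ ≤ Tb := by linarith
        _ ≤ M * ((ζm m) ^ (m + 1) / (1 - ζm m)) := hTb_le
        _ ≤ M * (ζ ^ (m + 1) / (1 - ζ) + (ζm m) ^ (m + 1) / (1 - ζm m)) := by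
            rw [mul_add]; linarith
    · -- symmetric case
      have hterm : ∀ i ∈ Finset.range m,
          0 ≤ a (i + 1) * ((ζm m) ^ (i + 1) - ζ ^ (i + 1)) := fun i _ =>
        mul_nonneg (habd _ (by omega)).1
          (sub_nonneg.2 (pow_le_pow_left₀ hζ0.le h _))
      have hsingle := Finset.single_le_sum hterm h0mem
      have h1le : ζm m - ζ ≤ a 1 * ((ζm m) ^ 1 - ζ ^ 1) := by
        have : 0 ≤ ζm m - ζ := sub_nonneg.2 h
        nlinarith
      have habs : |ζm m - ζ| = ζm m - ζ := abs_of_nonneg (sub_nonneg.2 h)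
      rw [habs]
      have hMζ : 0 ≤ M * ((ζm m) ^ (m + 1) / (1 - ζm m)) :=
        mul_nonneg hM.le (div_nonneg (pow_nonneg hz0.le _) (by linarith))
      have hD' : (∑ i ∈ Finset.range m, a (i + 1) * ((ζm m) ^ (i + 1) - ζ ^ (i + 1)))
          = Ta - Tb := by
        have := hD
        rw [Finset.sum_congr rfl fun i _ => mul_sub (a (i + 1)) _ _,
          Finset.sum_sub_distrib] at this ⊢
        linarith
      have : ζm m - ζ ≤ Ta - Tb := by
        calc ζm m - ζ ≤ a 1 * ((ζm m) ^ 1 - ζ ^ 1) := h1le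
          _ ≤ ∑ i ∈ Finset.range m, a (i + 1) * ((ζm m) ^ (i + 1) - ζ ^ (i + 1)) := by
              simpa using hsingle
          _ = Ta - Tb := hD'
      calc ζm m - ζ ≤ Ta - Tb := this
        _ ≤ Ta := by linarith
        _ ≤ M * (ζ ^ (m + 1) / (1 - ζ)) := hTa_le
        _ ≤ M * (ζ ^ (m + 1) / (1 - ζ) + (ζm m) ^ (m + 1) / (1 - ζm m)) := by
            rw [mul_add]; linarith
  refine ⟨?_, key⟩
  -- a uniform bound ζm m ≤ c < 1 eventually
  obtain ⟨c, K, hK1, hc0, hc1, hK⟩ :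
      ∃ (c : ℝ) (K : ℕ), 1 ≤ K ∧ 0 ≤ c ∧ c < 1 ∧ ∀ m : ℕ, K ≤ m → ζm m ≤ c := by
    by_cases h1 : a 1 = 1
    · push_neg at hane
      obtain ⟨k, hk2, hkne⟩ := hane h1
      have hak : 0 < a k := lt_of_le_of_ne (habd k (by omega)).1 (Ne.symm hkne)
      set δ : ℝ := a k / (2 * (1 + k * a k)) with hδ_def
      have hden : 0 < 1 + (k : ℝ) * a k := by positivity
      have hδ0 : 0 < δ := by positivity
      have hδhalf : δ ≤ 1 / 2 := by
        rw [hδ_def, div_le_div_iff₀ (by positivity) (by norm_num)]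
        have : (1 : ℝ) ≤ (k : ℝ) := by exact_mod_cast Nat.one_le_iff_ne_zero.mpr (by omega)
        nlinarith
      refine ⟨1 - δ, k, by omega, by linarith, by linarith, fun m hmk => ?_⟩
      have hm : 1 ≤ m := by omega
      have hz0 := hζm0 m hm
      have hz1 := hζm1 m hm
      by_contra hgt
      push_neg at hgt
      -- two-term lower bound for the series
      have hkm : k - 1 + 1 = k := by omega
      have hpair : a 1 * ζm m + a k * (ζm m) ^ k ≤ 1 := by
        have hne : (0 : ℕ) ≠ k - 1 := by omega
        have hsum := Summable.sum_le_tsum ({0, k - 1} : Finset ℕ)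
          (fun i _ => mul_nonneg (hbbd m (i + 1) hm (by omega)).1 (pow_nonneg hz0.le _))
          (hsb m hm)
        rw [Finset.sum_pair hne] at hsum
        rw [← hζms m hm] at hsum
        have e0 : b m (0 + 1) * (ζm m) ^ (0 + 1) = a 1 * ζm m := by
          rw [show (0 : ℕ) + 1 = 1 from rfl, hba m hm 1 le_rfl hm, pow_one]
        have ek : b m (k - 1 + 1) * (ζm m) ^ (k - 1 + 1) = a k * (ζm m) ^ k := by
          rw [hkm, hba m hm k (by omega) hmk]
        rw [e0, ek] at hsum
        exact hsum
      -- Bernoulli: (1 - δ)^k ≥ 1 - kδ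
      have hbern : 1 - (k : ℝ) * δ ≤ (1 - δ) ^ k := by
        have := one_add_mul_le_pow (a := -δ) (by linarith) k
        simpa [mul_comm, ← sub_eq_add_neg] using this
      have hpow : (1 - δ) ^ k < (ζm m) ^ k :=
        pow_lt_pow_left₀ hgt (by linarith) (by omega)
      have hδeq : δ * (2 * (1 + (k : ℝ) * a k)) = a k := by
        rw [hδ_def]; field_simp
      nlinarith [mul_le_mul_of_nonneg_left hbern hak.le,
        mul_lt_mul_of_pos_left hpow hak, h1]
    · have ha1' : 1 < a 1 := lt_of_le_of_ne ha1 (Ne.symm h1)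
      refine ⟨1 / a 1, 1, le_rfl, by positivity, (div_lt_one (by linarith)).2 ha1', ?_⟩
      intro m hm
      have hz0 := hζm0 m hm
      have hfirst : a 1 * ζm m ≤ 1 := by
        have := Summable.le_tsum (hsb m hm) 0
          (fun i _ => mul_nonneg (hbbd m (i + 1) hm (by omega)).1 (pow_nonneg hz0.le _))
        rw [← hζms m hm] at this
        simpa [hba m hm 1 le_rfl hm] using this
      rw [le_div_iff₀ (by linarith)]
      linarith [mul_comm (a 1) (ζm m) ▸ hfirst]
  -- squeeze
  have hgζ : Tendsto (fun m : ℕ => M * (ζ ^ (m + 1) / (1 - ζ))) atTop (nhds 0) := by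
    have h1 : Tendsto (fun m : ℕ => ζ ^ (m + 1)) atTop (nhds 0) :=
      (tendsto_pow_atTop_nhds_zero_of_lt_one hζ0.le hζ1).comp (tendsto_add_atTop_nat 1)
    simpa using ((h1.div_const (1 - ζ)).const_mul M)
  have hgc : Tendsto (fun m : ℕ => M * (c ^ (m + 1) / (1 - c))) atTop (nhds 0) := by
    have h1 : Tendsto (fun m : ℕ => c ^ (m + 1)) atTop (nhds 0) :=
      (tendsto_pow_atTop_nhds_zero_of_lt_one hc0 hc1).comp (tendsto_add_atTop_nat 1)
    simpa using ((h1.div_const (1 - c)).const_mul M)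
  have habs : Tendsto (fun m : ℕ => |ζm m - ζ|) atTop (nhds 0) := by
    refine squeeze_zero' (g := fun m : ℕ => M * (ζ ^ (m + 1) / (1 - ζ)) + M * (c ^ (m + 1) / (1 - c)))
      (Eventually.of_forall fun m => abs_nonneg _) ?_ ?_
    · filter_upwards [eventually_ge_atTop K] with m hmK
      have hm : 1 ≤ m := le_trans hK1 hmK
      have hz0 := hζm0 m hm
      have hz1 := hζm1 m hm
      have hle : ζm m ≤ c := hK m hmK
      calc |ζm m - ζ| ≤ M * (ζ ^ (m + 1) / (1 - ζ) + (ζm m) ^ (m + 1) / (1 - ζm m)) :=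
            key m hm
        _ ≤ M * (ζ ^ (m + 1) / (1 - ζ)) + M * (c ^ (m + 1) / (1 - c)) := by
            have hdiv : (ζm m) ^ (m + 1) / (1 - ζm m) ≤ c ^ (m + 1) / (1 - c) :=
              div_le_div₀ (pow_nonneg hc0 _) (pow_le_pow_left₀ hz0.le hle _)
                (by linarith) (by linarith)
            have := mul_le_mul_of_nonneg_left hdiv hM.le
            rw [mul_add]
            linarith
    · simpa using hgζ.add hgc
  rw [tendsto_iff_dist_tendsto_zero]
  simpa [Real.dist_eq] using habs
end

section
/- The function Δ is strictly increasing on [0, ∞): for all real numbers x, y with 0 ≤ x < y, Δ(x) < Δ(y). -/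
open Filter

/-- The digit sequence `u_α`: with `b = ⌈α⌉`, `u_α n = (b−1) + ⌈(α−b+1)(n+1)⌉ − ⌈(α−b+1)n⌉`,
the upper mechanical word of slope `α − b + 1` written over the alphabet `{b−1, b}`. -/
noncomputable def upperWord (α : ℝ) (n : ℕ) : ℤ :=
  (⌈α⌉ - 1) + (⌈(α - ⌈α⌉ + 1) * ((n : ℝ) + 1)⌉ - ⌈(α - ⌈α⌉ + 1) * (n : ℝ)⌉)

/-- `Δ` is the devil's staircase function: `Δ 0 = 1` and, for each `α > 0`, `Δ α` is the
unique real `β > 1` satisfying `∑_{n=0}^∞ u_α(n)·β^{−(n+1)} = 1`. -/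
def IsDevilStaircase (Δ : ℝ → ℝ) : Prop :=
  Δ 0 = 1 ∧ ∀ α : ℝ, 0 < α →
    (1 < Δ α ∧ ∑' n : ℕ, (upperWord α n : ℝ) / (Δ α) ^ (n + 1) = 1) ∧
    ∀ β : ℝ, 1 < β → (∑' n : ℕ, (upperWord α n : ℝ) / β ^ (n + 1) = 1) → β = Δ α

/-- The digit is the difference of ceilings of `α·n`. -/
lemma upperWord_eq (α : ℝ) (n : ℕ) :
    upperWord α n = ⌈α * ((n : ℝ) + 1)⌉ - ⌈α * (n : ℝ)⌉ := by
  have h1 : (α - ⌈α⌉ + 1) * ((n : ℝ) + 1)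
      = α * ((n : ℝ) + 1) - ((⌈α⌉ - 1) * ((n : ℤ) + 1) : ℤ) := by
    push_cast; ring
  have h2 : (α - ⌈α⌉ + 1) * (n : ℝ) = α * (n : ℝ) - ((⌈α⌉ - 1) * (n : ℤ) : ℤ) := by
    push_cast; ring
  rw [upperWord, h1, h2, Int.ceil_sub_intCast, Int.ceil_sub_intCast]
  ring

lemma upperWord_nonneg {α : ℝ} (hα : 0 < α) (n : ℕ) : 0 ≤ upperWord α n := by
  rw [upperWord_eq]
  have : α * (n : ℝ) ≤ α * ((n : ℝ) + 1) := by nlinarith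
  have := Int.ceil_le_ceil this
  omega

lemma upperWord_le (α : ℝ) (n : ℕ) : upperWord α n ≤ ⌈α⌉ := by
  rw [upperWord_eq]
  have h : α * ((n : ℝ) + 1) = α * (n : ℝ) + α := by ring
  have := Int.ceil_add_le (α * (n : ℝ)) α
  rw [h]
  omega

lemma upperWord_zero {α : ℝ} (hα : 0 < α) : 1 ≤ upperWord α 0 := by
  rw [upperWord_eq]
  simp only [Nat.cast_zero, mul_zero, zero_add, mul_one, Int.ceil_zero, sub_zero]
  exact Int.one_le_ceil_iff.mpr hα

/-- Summability of the staircase partial-sum series. -/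
lemma summable_ceil {α β : ℝ} (hα : 0 < α) (hβ : 1 < β) :
    Summable (fun n : ℕ => (⌈α * (n : ℝ)⌉ : ℝ) / β ^ n) := by
  have hβ0 : (0:ℝ) < β := lt_trans one_pos hβ
  have hr0 : (0:ℝ) ≤ 1 / β := by positivity
  have hr1 : 1 / β < 1 := by rw [div_lt_one hβ0]; exact hβ
  have h1 : Summable (fun n : ℕ => (n : ℝ) * (1 / β) ^ n) := by
    simpa using summable_pow_mul_geometric_of_norm_lt_one 1
      (r := 1/β) (by rw [Real.norm_eq_abs, abs_of_nonneg hr0]; exact hr1)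
  have h2 : Summable (fun n : ℕ => (1 / β) ^ n) := summable_geometric_of_lt_one hr0 hr1
  have hsum : Summable (fun n : ℕ => α * ((n : ℝ) * (1/β) ^ n) + (1/β) ^ n) :=
    (h1.mul_left α).add h2
  refine Summable.of_nonneg_of_le (fun n => ?_) (fun n => ?_) hsum
  · have h0 : (0:ℤ) ≤ ⌈α * (n : ℝ)⌉ := Int.ceil_nonneg (by positivity)
    positivity
  · have hle : (⌈α * (n : ℝ)⌉ : ℝ) ≤ α * n + 1 := le_of_lt (Int.ceil_lt_add_one _)
    have hpow : (0:ℝ) < β ^ n := by positivity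
    rw [div_le_iff₀ hpow]
    have : (α * ((n : ℝ) * (1/β) ^ n) + (1/β) ^ n) * β ^ n = α * n + 1 := by
      rw [one_div, inv_pow]
      field_simp
    rw [this]; exact hle

lemma summable_upperWord {α β : ℝ} (hα : 0 < α) (hβ : 1 < β) :
    Summable (fun n : ℕ => (upperWord α n : ℝ) / β ^ (n + 1)) := by
  have hβ0 : (0:ℝ) < β := lt_trans one_pos hβ
  have hr0 : (0:ℝ) ≤ 1 / β := by positivity
  have hr1 : 1 / β < 1 := by rw [div_lt_one hβ0]; exact hβ
  have h2 : Summable (fun n : ℕ => (⌈α⌉ : ℝ) * (1 / β) ^ (n + 1)) := by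
    exact (((summable_geometric_of_lt_one hr0 hr1).comp_injective
      (add_left_injective 1)).mul_left _)
  refine Summable.of_nonneg_of_le (fun n => ?_) (fun n => ?_) h2
  · have := upperWord_nonneg hα n
    have h0 : (0:ℝ) ≤ (upperWord α n : ℝ) := by exact_mod_cast this
    positivity
  · have hle : (upperWord α n : ℝ) ≤ (⌈α⌉ : ℝ) := by exact_mod_cast upperWord_le α n
    have hpow : (0:ℝ) < β ^ (n+1) := by positivity
    rw [div_le_iff₀ hpow, one_div, inv_pow, mul_assoc,
      inv_mul_cancel₀ (ne_of_gt hpow), mul_one]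
    exact hle

/-- Abel summation identity. -/
lemma abel_identity {α β : ℝ} (hα : 0 < α) (hβ : 1 < β) :
    ∑' n : ℕ, (upperWord α n : ℝ) / β ^ (n + 1)
      = (1 - 1/β) * ∑' n : ℕ, (⌈α * ((n : ℝ) + 1)⌉ : ℝ) / β ^ (n + 1) := by
  have hβ0 : (0:ℝ) < β := lt_trans one_pos hβ
  set g : ℕ → ℝ := fun n => (⌈α * (n : ℝ)⌉ : ℝ) / β ^ n with hg
  have hgsum : Summable g := summable_ceil hα hβ
  have hgsum1 : Summable (fun n => g (n + 1)) := (summable_nat_add_iff 1).mpr hgsum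
  have key : ∀ n : ℕ, (upperWord α n : ℝ) / β ^ (n + 1) = g (n+1) - (1/β) * g n := by
    intro n
    have := upperWord_eq α n
    have hcast : (upperWord α n : ℝ) = (⌈α * ((n : ℝ) + 1)⌉ : ℝ) - (⌈α * (n : ℝ)⌉ : ℝ) := by
      rw [this]; push_cast; ring
    rw [hcast, hg]
    simp only []
    push_cast
    rw [pow_succ]
    field_simp
  rw [tsum_congr key, Summable.tsum_sub hgsum1 (hgsum.mul_left _), tsum_mul_left]
  have h0 : g 0 = 0 := by simp [hg]
  have : ∑' n, g n = ∑' n, g (n+1) := by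
    rw [Summable.tsum_eq_zero_add hgsum, h0, zero_add]
  rw [this]
  have heq : ∀ n : ℕ, g (n+1) = (⌈α * ((n : ℝ) + 1)⌉ : ℝ) / β ^ (n + 1) := by
    intro n; simp [hg]
  rw [tsum_congr heq]
  ring

/-- Strict monotonicity in α at a fixed β. -/
lemma F_strictMono {x y β : ℝ} (hx : 0 < x) (hxy : x < y) (hβ : 1 < β) :
    ∑' n : ℕ, (upperWord x n : ℝ) / β ^ (n + 1)
      < ∑' n : ℕ, (upperWord y n : ℝ) / β ^ (n + 1) := by
  have hy : 0 < y := lt_trans hx hxy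
  have hβ0 : (0:ℝ) < β := lt_trans one_pos hβ
  rw [abel_identity hx hβ, abel_identity hy hβ]
  have hpos : 0 < 1 - 1/β := by
    rw [sub_pos, div_lt_one hβ0]; exact hβ
  apply mul_lt_mul_of_pos_left _ hpos
  -- choose a good index
  obtain ⟨N, hN⟩ := exists_nat_gt (1 / (y - x))
  have hyx : 0 < y - x := by linarith
  have hN1 : 1 < ((N:ℝ) + 1) * (y - x) := by
    have : 1 / (y - x) < (N:ℝ) + 1 := by linarith
    calc (1:ℝ) = (1/(y-x)) * (y-x) := by field_simp
    _ < ((N:ℝ) + 1) * (y - x) := by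
        exact mul_lt_mul_of_pos_right this hyx
  -- summability of both series
  have hsx : Summable (fun n : ℕ => (⌈x * ((n : ℝ) + 1)⌉ : ℝ) / β ^ (n + 1)) := by
    have := (summable_nat_add_iff 1).mpr (summable_ceil hx hβ)
    refine this.congr fun n => ?_
    push_cast; norm_num
  have hsy : Summable (fun n : ℕ => (⌈y * ((n : ℝ) + 1)⌉ : ℝ) / β ^ (n + 1)) := by
    have := (summable_nat_add_iff 1).mpr (summable_ceil hy hβ)
    refine this.congr fun n => ?_
    push_cast; norm_num
  refine Summable.tsum_lt_tsum (i := N) (fun n => ?_) ?_ hsx hsy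
  · have h : x * ((n:ℝ)+1) ≤ y * ((n:ℝ)+1) := by nlinarith
    have := Int.ceil_le_ceil h
    have hc : (⌈x * ((n:ℝ)+1)⌉ : ℝ) ≤ (⌈y * ((n:ℝ)+1)⌉ : ℝ) := by exact_mod_cast this
    gcongr
  · have hlt : (⌈x * ((N:ℝ)+1)⌉ : ℝ) < (⌈y * ((N:ℝ)+1)⌉ : ℝ) := by
      have h1 : (⌈x * ((N:ℝ)+1)⌉ : ℝ) < x * ((N:ℝ)+1) + 1 := Int.ceil_lt_add_one _
      have h2 : y * ((N:ℝ)+1) ≤ (⌈y * ((N:ℝ)+1)⌉ : ℝ) := Int.le_ceil _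
      nlinarith
    gcongr

/-- Strict antitonicity in β at a fixed α. -/
lemma F_strictAnti {α β₁ β₂ : ℝ} (hα : 0 < α) (h1 : 1 < β₁) (h12 : β₁ < β₂) :
    ∑' n : ℕ, (upperWord α n : ℝ) / β₂ ^ (n + 1)
      < ∑' n : ℕ, (upperWord α n : ℝ) / β₁ ^ (n + 1) := by
  have h2 : 1 < β₂ := lt_trans h1 h12
  have hb1 : (0:ℝ) < β₁ := lt_trans one_pos h1
  refine Summable.tsum_lt_tsum (i := 0) (fun n => ?_) ?_ (summable_upperWord hα h2)
    (summable_upperWord hα h1)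
  · have hnn : (0:ℝ) ≤ (upperWord α n : ℝ) := by exact_mod_cast upperWord_nonneg hα n
    gcongr
  · have h1' : (1:ℝ) ≤ (upperWord α 0 : ℝ) := by exact_mod_cast upperWord_zero hα
    have : β₁ ^ (0+1) < β₂ ^ (0+1) := by simpa using h12
    apply div_lt_div_of_pos_left (by linarith) (by positivity) this

/-- The devil's staircase `Δ` is strictly increasing on `[0, ∞)`. -/
theorem devilStaircase_strictMono (Δ : ℝ → ℝ) (hΔ : IsDevilStaircase Δ) :
    ∀ x y : ℝ, 0 ≤ x → x < y → Δ x < Δ y := by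
  intro x y hx hxy
  have hy : 0 < y := lt_of_le_of_lt hx hxy
  obtain ⟨⟨hΔy1, hΔy2⟩, _⟩ := hΔ.2 y hy
  rcases eq_or_lt_of_le hx with h0 | hx0
  · rw [← h0, hΔ.1]; exact hΔy1
  · obtain ⟨⟨hΔx1, hΔx2⟩, _⟩ := hΔ.2 x hx0
    by_contra hle
    push_neg at hle
    have hlt : ∑' n : ℕ, (upperWord x n : ℝ) / (Δ y) ^ (n + 1) < 1 := by
      calc ∑' n : ℕ, (upperWord x n : ℝ) / (Δ y) ^ (n + 1)
          < ∑' n : ℕ, (upperWord y n : ℝ) / (Δ y) ^ (n + 1) := F_strictMono hx0 hxy hΔy1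
        _ = 1 := hΔy2
    rcases eq_or_lt_of_le hle with heq | hlt2
    · rw [heq, hΔx2] at hlt; exact lt_irrefl 1 hlt
    · have := F_strictAnti hx0 hΔy1 hlt2
      rw [hΔx2] at this
      linarith
end

section
/- If α > 0 is rational, then Δ(α) is an algebraic integer, i.e., Δ(α) is integral over ℤ. -/
open Filter

open Finset Polynomial

/-- If `α > 0` is rational, then `Δ(α)` is an algebraic integer. -/
theorem devilStaircase_algebraic_integer_at_rational (Δ : ℝ → ℝ) (hΔ : IsDevilStaircase Δ)
    (α : ℝ) (h0 : 0 < α) (hrat : ∃ r : ℚ, (r : ℝ) = α) :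
    IsIntegral ℤ (Δ α) := by
  obtain ⟨r, hr⟩ := hrat
  obtain ⟨⟨hβ, hsum⟩, -⟩ := hΔ.2 α h0
  set β := Δ α with hβdef
  set u : ℕ → ℤ := upperWord α with hu
  set s : ℝ := α - ⌈α⌉ + 1 with hs
  obtain ⟨q, p, hq, hsq⟩ : ∃ (q : ℕ) (p : ℤ), 0 < q ∧ s * q = p := by
    set rq : ℚ := r - ⌈α⌉ + 1 with hrq
    refine ⟨rq.den, rq.num, rq.pos, ?_⟩
    have hsrq : s = (rq : ℝ) := by rw [hs, hrq]; push_cast [hr]; ring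
    rw [hsrq, Rat.cast_def, div_mul_cancel₀]
    exact (Nat.cast_pos.mpr rq.pos).ne'
  -- periodicity
  have hper : ∀ n, u (n + q) = u n := by
    intro n
    simp only [hu, upperWord, ← hs]
    have e1 : s * ((↑(n + q) : ℝ) + 1) = s * ((n : ℝ) + 1) + p := by
      push_cast; rw [← hsq]; ring
    have e2 : s * (↑(n + q) : ℝ) = s * (n : ℝ) + p := by
      push_cast; rw [← hsq]; ring
    rw [e1, e2, Int.ceil_add_intCast, Int.ceil_add_intCast]
    ring
  -- digit bounds
  have hs_pos : 0 < s := by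
    have := Int.ceil_lt_add_one α; rw [hs]; linarith
  have hs_le : s ≤ 1 := by
    have := Int.le_ceil α; rw [hs]; linarith
  have hbound : ∀ n, |(u n : ℝ)| ≤ |(⌈α⌉ : ℝ)| + 1 := by
    intro n
    set d : ℤ := ⌈s * ((n : ℝ) + 1)⌉ - ⌈s * (n : ℝ)⌉ with hd
    have hd0 : 0 ≤ d := by
      have h1 : ((⌈s * (n : ℝ)⌉ : ℝ)) < s * n + 1 := Int.ceil_lt_add_one _
      have h2 : s * ((n : ℝ) + 1) ≤ ⌈s * ((n : ℝ) + 1)⌉ := Int.le_ceil _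
      have h3 : (-1 : ℝ) < (d : ℝ) := by push_cast [hd]; nlinarith
      have : (-1 : ℤ) < d := by exact_mod_cast h3
      omega
    have hd1 : d ≤ 1 := by
      have h1 : s * (n : ℝ) ≤ ⌈s * (n : ℝ)⌉ := Int.le_ceil _
      have h2 : ((⌈s * ((n : ℝ) + 1)⌉ : ℝ)) < s * ((n : ℝ) + 1) + 1 := Int.ceil_lt_add_one _
      have h3 : (d : ℝ) < 2 := by push_cast [hd]; nlinarith
      have : d < 2 := by exact_mod_cast h3
      omega
    have hun : u n = (⌈α⌉ - 1) + d := by rw [hu, upperWord, hd, ← hs]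
    have hZ : |u n| ≤ |⌈α⌉| + 1 := by
      have h1 := le_abs_self ⌈α⌉
      have h2 := neg_abs_le ⌈α⌉
      rw [hun, abs_le]
      constructor <;> linarith
    calc |(u n : ℝ)| = ((|u n| : ℤ) : ℝ) := by push_cast; ring
      _ ≤ ((|⌈α⌉| + 1 : ℤ) : ℝ) := by exact_mod_cast hZ
      _ = |(⌈α⌉ : ℝ)| + 1 := by push_cast; ring
  have hβ0 : (0 : ℝ) < β := lt_trans one_pos hβ
  have hβne : β ≠ 0 := ne_of_gt hβ0
  -- summability
  set f : ℕ → ℝ := fun n => (u n : ℝ) / β ^ (n + 1) with hf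
  set C : ℝ := |(⌈α⌉ : ℝ)| + 1 with hC
  have hC0 : 0 ≤ C := by positivity
  have hsummable : Summable f := by
    have hgeo : Summable (fun n : ℕ => (C / β) * (1 / β) ^ n) := by
      apply Summable.mul_left
      apply summable_geometric_of_lt_one (by positivity)
      rw [div_lt_one hβ0]; linarith
    apply Summable.of_norm_bounded hgeo
    intro n
    have hpow : (0 : ℝ) < β ^ (n + 1) := by positivity
    have e1 : ‖f n‖ = |(u n : ℝ)| / β ^ (n + 1) := by
      rw [hf]
      simp only [Real.norm_eq_abs, abs_div, abs_pow, abs_of_pos hβ0]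
    have e2 : C / β * (1 / β) ^ n = C / β ^ (n + 1) := by
      rw [div_pow, one_pow, div_mul_div_comm, mul_one, ← pow_succ']
    rw [e1, e2]
    gcongr
    exact hbound n
  -- key identity
  have hshift : ∀ n, f (n + q) = f n / β ^ q := by
    intro n
    rw [hf]
    simp only [hper n]
    rw [show n + q + 1 = (n + 1) + q by ring, pow_add]
    field_simp
  have htail : ∑' n, f (n + q) = 1 / β ^ q := by
    rw [tsum_congr hshift, tsum_div_const, hsum]
  have hsplit : ∑ i ∈ range q, f i + ∑' n, f (n + q) = ∑' n, f n :=
    hsummable.sum_add_tsum_nat_add q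
  have h1 : (1 : ℝ) = ∑ i ∈ range q, f i + 1 / β ^ q := by
    rw [← htail, hsplit]; exact hsum.symm
  have hkey : β ^ q = ∑ i ∈ range q, (u i : ℝ) * β ^ (q - 1 - i) + 1 := by
    have h2 : β ^ q = β ^ q * (∑ i ∈ range q, f i) + 1 :=
      calc β ^ q = β ^ q * 1 := (mul_one _).symm
        _ = β ^ q * (∑ i ∈ range q, f i + 1 / β ^ q) := by rw [← h1]
        _ = β ^ q * (∑ i ∈ range q, f i) + β ^ q * (1 / β ^ q) := by rw [mul_add]
        _ = β ^ q * (∑ i ∈ range q, f i) + 1 := by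
            rw [mul_one_div, div_self (by positivity)]
    rw [h2, Finset.mul_sum]
    congr 1
    apply Finset.sum_congr rfl
    intro i hi
    have hiq : i < q := Finset.mem_range.mp hi
    rw [hf]
    rw [show β ^ q = β ^ (q - 1 - i) * β ^ (i + 1) by rw [← pow_add]; congr 1; omega]
    field_simp
  -- polynomial
  obtain ⟨q', rfl⟩ : ∃ q', q = q' + 1 := ⟨q - 1, by omega⟩
  refine ⟨X ^ (q' + 1) - (∑ i ∈ range (q' + 1), Polynomial.C (u i) * X ^ (q' - i) + 1), ?_, ?_⟩
  · apply monic_X_pow_sub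
    apply lt_of_le_of_lt _ (show ((q' : ℕ) : WithBot ℕ) < ((q' + 1 : ℕ) : WithBot ℕ) by
      exact_mod_cast Nat.lt_succ_self q')
    apply le_trans (degree_add_le _ _)
    apply max_le
    · apply le_trans (degree_sum_le _ _)
      apply Finset.sup_le
      intro i hi
      apply le_trans (degree_C_mul_X_pow_le _ _)
      exact_mod_cast Nat.cast_le.mpr (Nat.sub_le q' i)
    · rw [degree_one]
      exact_mod_cast Nat.cast_le.mpr (Nat.zero_le q')
  · have he : ∀ i, q' + 1 - 1 - i = q' - i := fun i => by omega
    simp only [algebraMap_int_eq]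
    simp only [eval₂_sub, eval₂_add, eval₂_one, eval₂_pow, eval₂_X, eval₂_finset_sum,
      eval₂_mul, eval₂_C]
    simp only [eq_intCast]
    rw [sub_eq_zero, hkey]
    congr 1
end

section
/- Let b ≥ 1 be an integer, let p, q be coprime integers with 0 < p < q, and set α = b − 1 + p/q. Suppose β₊ is the right limit of Δ at α, i.e., Δ(x) → β₊ as x → α from the right. Define v : ℕ → ℤ by v(0) = b and v(n) = (b − 1) + ⌊(n+1)p/q⌋ − ⌊n·p/q⌋ for n ≥ 1 (the periodic word b·(z_{p,q}·b·(b−1))^ω over the alphabet {b−1, b}). Then ∑_{n=0}^∞ v(n)·β₊^{−(n+1)} = 1; that is, the β₊-expansion of 1 is b(z_{p,q}b(b−1))^ω. -/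
open Filter Topology

/-- The periodic word `b·(z_{p,q}·b·(b−1))^ω` over `{b−1, b}`:
`v 0 = b` and `v n = (b−1) + ⌊(n+1)p/q⌋ − ⌊np/q⌋` for `n ≥ 1`. -/
def upperSCWord (b : ℤ) (p q : ℕ) (n : ℕ) : ℤ :=
  if n = 0 then b
  else (b - 1) + (⌊(((n : ℚ) + 1) * p) / q⌋ - ⌊((n : ℚ) * p) / q⌋)

private lemma digit_mono {s : ℝ} (hs : 0 ≤ s) (n : ℕ) :
    ⌈s * (n : ℝ)⌉ ≤ ⌈s * ((n : ℝ) + 1)⌉ := by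
  apply Int.ceil_le_ceil
  nlinarith

private lemma digit_le {s : ℝ} (hs : s ≤ 1) (n : ℕ) :
    ⌈s * ((n : ℝ) + 1)⌉ ≤ ⌈s * (n : ℝ)⌉ + 1 := by
  have h : s * ((n : ℝ) + 1) ≤ s * (n : ℝ) + 1 := by nlinarith
  calc ⌈s * ((n : ℝ) + 1)⌉ ≤ ⌈s * (n : ℝ) + 1⌉ := Int.ceil_le_ceil h
    _ = ⌈s * (n : ℝ)⌉ + 1 := Int.ceil_add_one _

private lemma digit_sum (s : ℝ) (b : ℤ) (N : ℕ) :
    ∑ n ∈ Finset.range N, ((b - 1) + (⌈s * ((n : ℝ) + 1)⌉ - ⌈s * (n : ℝ)⌉))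
      = (b - 1) * N + ⌈s * (N : ℝ)⌉ := by
  rw [Finset.sum_add_distrib]
  have h1 : ∑ n ∈ Finset.range N, (⌈s * ((n : ℝ) + 1)⌉ - ⌈s * (n : ℝ)⌉)
      = ⌈s * (N : ℝ)⌉ := by
    have h := Finset.sum_range_sub (fun n : ℕ => ⌈s * (n : ℝ)⌉) N
    simp only [Nat.cast_succ] at h
    rw [h]
    simp
  rw [h1, Finset.sum_const, Finset.card_range]
  push_cast
  ring

/-- If `β₊` is the right limit of `Δ` at `α = b − 1 + p/q`, then the `β₊`-expansion of 1 is
the word `b(z_{p,q}b(b−1))^ω`, i.e. `∑ v(n)·β₊^{−(n+1)} = 1`. -/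
theorem upper_self_christoffel_expansion (Δ : ℝ → ℝ) (hΔ : IsDevilStaircase Δ)
    (b : ℤ) (hb : 1 ≤ b) (p q : ℕ) (hp : 0 < p) (hpq : p < q) (hcop : Nat.Coprime p q)
    (βp : ℝ)
    (hβp : Tendsto Δ
      (nhdsWithin ((b : ℝ) - 1 + (p : ℝ) / (q : ℝ)) (Set.Ioi ((b : ℝ) - 1 + (p : ℝ) / (q : ℝ))))
      (nhds βp)) :
    ∑' n : ℕ, (upperSCWord b p q n : ℝ) / βp ^ (n + 1) = 1 := by
  obtain ⟨-, hmain⟩ := hΔ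
  have hb1 : (1 : ℝ) ≤ (b : ℝ) := by exact_mod_cast hb
  have hq0 : 0 < (q : ℝ) := by exact_mod_cast hp.trans hpq
  have hp0 : 0 < (p : ℝ) := by exact_mod_cast hp
  have hpq1 : (p : ℝ) / q < 1 := (div_lt_one hq0).2 (by exact_mod_cast hpq)
  have hpq0 : 0 < (p : ℝ) / q := div_pos hp0 hq0
  set A : ℝ := (b : ℝ) - 1 + (p : ℝ) / (q : ℝ) with hAdef
  have hAb : A < (b : ℝ) := by rw [hAdef]; linarith
  have hbA : (b : ℝ) - 1 < A := by rw [hAdef]; linarith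
  have hA0 : 0 < A := by linarith
  set L := nhdsWithin A (Set.Ioi A) with hLdef
  have hIooL : Set.Ioo A (b : ℝ) ∈ L := Ioo_mem_nhdsGT hAb
  -- ceiling on the interval
  have hceil : ∀ x ∈ Set.Ioo A (b : ℝ), ⌈x⌉ = b := by
    intro x hx
    rw [Int.ceil_eq_iff]
    exact ⟨by push_cast; linarith [hx.1], by push_cast; linarith [hx.2]⟩
  have hword : ∀ x ∈ Set.Ioo A (b : ℝ), ∀ n : ℕ,
      upperWord x n = (b - 1) + (⌈(x - (b : ℝ) + 1) * ((n : ℝ) + 1)⌉ - ⌈(x - (b : ℝ) + 1) * (n : ℝ)⌉) := by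
    intro x hx n
    rw [upperWord, hceil x hx]
  -- γ : a uniform lower bound for Δ on the interval
  set γ : ℝ := (2 : ℝ) ^ (((q : ℝ) + 1)⁻¹) with hγdef
  have hγ1 : 1 < γ := by
    rw [hγdef]
    apply (Real.one_lt_rpow_iff_of_pos (by norm_num)).2
    exact Or.inl ⟨by norm_num, by positivity⟩
  have hγ0 : (0 : ℝ) < γ := lt_trans one_pos hγ1
  have hγpow : γ ^ (q + 1) = 2 := by
    rw [hγdef, ← Real.rpow_natCast ((2 : ℝ) ^ (((q : ℝ) + 1)⁻¹)) (q + 1),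
      ← Real.rpow_mul (by norm_num : (0 : ℝ) ≤ 2)]
    rw [show (((q : ℝ) + 1)⁻¹ * ((q + 1 : ℕ) : ℝ)) = 1 by push_cast; field_simp]
    exact Real.rpow_one 2
  -- digit bounds on the interval
  have hdig_bds : ∀ x ∈ Set.Ioo A (b : ℝ), ∀ n : ℕ,
      0 ≤ upperWord x n ∧ upperWord x n ≤ b := by
    intro x hx n
    have hs0 : (0 : ℝ) ≤ x - (b : ℝ) + 1 := by linarith [hx.1]
    have hs1 : x - (b : ℝ) + 1 ≤ 1 := by linarith [hx.2]
    have h1 := digit_mono hs0 n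
    have h2 := digit_le hs1 n
    rw [hword x hx n]
    omega
  -- uniform lower bound: γ ≤ Δ x on the interval
  have hγΔ : ∀ x ∈ Set.Ioo A (b : ℝ), γ ≤ Δ x := by
    intro x hx
    have hx0 : 0 < x := lt_trans hA0 hx.1
    obtain ⟨⟨hΔ1, hΔsum⟩, -⟩ := hmain x hx0
    set β := Δ x with hβdef
    have hβ0 : 0 < β := lt_trans one_pos hΔ1
    have hnn : ∀ n : ℕ, (0 : ℝ) ≤ (upperWord x n : ℝ) / β ^ (n + 1) := by
      intro n
      apply div_nonneg _ (le_of_lt (pow_pos hβ0 _))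
      exact_mod_cast (hdig_bds x hx n).1
    have hub : ∀ n : ℕ, (upperWord x n : ℝ) ≤ (b : ℝ) := by
      intro n; exact_mod_cast (hdig_bds x hx n).2
    have hsummable : Summable (fun n : ℕ => (upperWord x n : ℝ) / β ^ (n + 1)) := by
      have hg : Summable (fun n : ℕ => ((b : ℝ) * β⁻¹) * β⁻¹ ^ n) :=
        (summable_geometric_of_lt_one (by positivity)
          (inv_lt_one_of_one_lt₀ hΔ1)).mul_left _
      apply Summable.of_nonneg_of_le hnn (fun n => ?_) hg
      calc (upperWord x n : ℝ) / β ^ (n + 1) ≤ (b : ℝ) / β ^ (n + 1) := by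
            gcongr
            exact_mod_cast (hdig_bds x hx n).2
        _ = ((b : ℝ) * β⁻¹) * β⁻¹ ^ n := by
            rw [div_eq_mul_inv, ← inv_pow, pow_succ]
            ring
    have hpartial : ∑ n ∈ Finset.range (q + 1), (upperWord x n : ℝ) / β ^ (n + 1) ≤ 1 := by
      rw [← hΔsum]
      exact Summable.sum_le_tsum _ (fun n _ => hnn n) hsummable
    have hterm : ∀ n ∈ Finset.range (q + 1),
        (upperWord x n : ℝ) / β ^ (q + 1) ≤ (upperWord x n : ℝ) / β ^ (n + 1) := by
      intro n hn
      have hn' : n + 1 ≤ q + 1 := by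
        have := Finset.mem_range.1 hn; omega
      gcongr
      · exact_mod_cast (hdig_bds x hx n).1
      · exact hΔ1.le
    have hsum2 : (2 : ℝ) ≤ ∑ n ∈ Finset.range (q + 1), (upperWord x n : ℝ) := by
      have hZ : ∑ n ∈ Finset.range (q + 1), upperWord x n
          = (b - 1) * ((q : ℤ) + 1) + ⌈(x - (b : ℝ) + 1) * (((q + 1 : ℕ) : ℝ))⌉ := by
        rw [Finset.sum_congr rfl (fun n _ => hword x hx n), digit_sum]
        push_cast
        ring
      have hceil2 : (p : ℤ) + 1 ≤ ⌈(x - (b : ℝ) + 1) * (((q + 1 : ℕ) : ℝ))⌉ := by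
        rw [Int.add_one_le_iff, Int.lt_ceil]
        push_cast
        have hsp : (p : ℝ) / q < x - (b : ℝ) + 1 := by
          have := hx.1; rw [hAdef] at this; linarith
        have h3 : (p : ℝ) / q * ((q : ℝ) + 1) < (x - (b : ℝ) + 1) * ((q : ℝ) + 1) :=
          mul_lt_mul_of_pos_right hsp (by linarith)
        have h4 : (p : ℝ) / q * ((q : ℝ) + 1) = (p : ℝ) + (p : ℝ) / q := by
          rw [mul_add, mul_one, div_mul_cancel₀ _ (ne_of_gt hq0)]
        linarith
      have hbq : (0 : ℤ) ≤ (b - 1) * ((q : ℤ) + 1) := by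
        apply mul_nonneg <;> omega
      have hfin : (2 : ℤ) ≤ ∑ n ∈ Finset.range (q + 1), upperWord x n := by
        rw [hZ]
        have hp1 : (1 : ℤ) ≤ (p : ℤ) := by exact_mod_cast hp
        omega
      calc (2 : ℝ) = ((2 : ℤ) : ℝ) := by norm_num
        _ ≤ ((∑ n ∈ Finset.range (q + 1), upperWord x n : ℤ) : ℝ) := by exact_mod_cast hfin
        _ = ∑ n ∈ Finset.range (q + 1), (upperWord x n : ℝ) := by push_cast; rfl
    have h2β : (2 : ℝ) ≤ β ^ (q + 1) := by
      have hchain : (2 : ℝ) / β ^ (q + 1) ≤ 1 := by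
        calc (2 : ℝ) / β ^ (q + 1)
            ≤ (∑ n ∈ Finset.range (q + 1), (upperWord x n : ℝ)) / β ^ (q + 1) := by
              gcongr
          _ = ∑ n ∈ Finset.range (q + 1), (upperWord x n : ℝ) / β ^ (q + 1) :=
              Finset.sum_div _ _ _
          _ ≤ ∑ n ∈ Finset.range (q + 1), (upperWord x n : ℝ) / β ^ (n + 1) :=
              Finset.sum_le_sum hterm
          _ ≤ 1 := hpartial
      rwa [div_le_one (pow_pos hβ0 _)] at hchain
    apply le_of_pow_le_pow_left₀ (Nat.succ_ne_zero q) hβ0.le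
    rw [hγpow]
    exact h2β
  -- γ ≤ βp
  have hγβp : γ ≤ βp := by
    apply ge_of_tendsto hβp
    exact Filter.eventually_of_mem hIooL hγΔ
  have hβp1 : 1 < βp := lt_of_lt_of_le hγ1 hγβp
  have hβp0 : 0 < βp := lt_trans one_pos hβp1
  -- pointwise convergence of digits
  have hgtA : ∀ᶠ x in L, A < x := Filter.eventually_of_mem self_mem_nhdsWithin (fun x hx => hx)
  have key : ∀ m : ℕ, 1 ≤ m → ∀ᶠ x in L,
      ⌈(x - (b : ℝ) + 1) * (m : ℝ)⌉ = ⌊((m : ℚ) * p) / q⌋ + 1 := by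
    intro m hm
    set F : ℤ := ⌊((m : ℚ) * p) / q⌋ with hFdef
    have hm0 : (0 : ℝ) < m := by exact_mod_cast hm
    have hFr : F = ⌊(m : ℝ) * p / q⌋ := by
      rw [hFdef, ← Rat.floor_cast (α := ℝ)]
      push_cast
      rfl
    have hF1 : (F : ℝ) ≤ (m : ℝ) * p / q := by rw [hFr]; exact Int.floor_le _
    have hF2 : (m : ℝ) * p / q < (F : ℝ) + 1 := by rw [hFr]; exact Int.lt_floor_add_one _
    have hAc : A < (b : ℝ) - 1 + ((F : ℝ) + 1) / m := by
      rw [hAdef]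
      have h1 : (p : ℝ) / q < ((F : ℝ) + 1) / m := by
        rw [div_lt_div_iff₀ hq0 hm0]
        have h2 : (m : ℝ) * p < ((F : ℝ) + 1) * q := by
          rw [div_lt_iff₀ hq0] at hF2
          linarith
        nlinarith
      linarith
    have hev : ∀ᶠ x in L, x < (b : ℝ) - 1 + ((F : ℝ) + 1) / m :=
      (eventually_lt_nhds hAc).filter_mono nhdsWithin_le_nhds
    filter_upwards [hev, hgtA] with x h1 h2
    rw [Int.ceil_eq_iff]
    constructor
    · push_cast
      have hsp : (p : ℝ) / q < x - (b : ℝ) + 1 := by rw [hAdef] at h2; linarith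
      have : (p : ℝ) / q * m < (x - (b : ℝ) + 1) * m := by
        exact mul_lt_mul_of_pos_right hsp hm0
      have hpm : (p : ℝ) / q * m = (m : ℝ) * p / q := by ring
      linarith
    · have hs : x - (b : ℝ) + 1 < ((F : ℝ) + 1) / m := by linarith
      have := mul_lt_mul_of_pos_right hs hm0
      rw [div_mul_cancel₀ _ (ne_of_gt hm0)] at this
      push_cast
      linarith
  have hdig : ∀ n : ℕ, ∀ᶠ x in L, upperWord x n = upperSCWord b p q n := by
    intro n
    rcases Nat.eq_zero_or_pos n with rfl | hn
    · filter_upwards [hIooL] with x hx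
      rw [hword x hx 0, upperSCWord, if_pos rfl]
      have hs0 : 0 < x - (b : ℝ) + 1 := by linarith [hx.1]
      have hs1 : x - (b : ℝ) + 1 ≤ 1 := by linarith [hx.2]
      have h1 : ⌈(x - (b : ℝ) + 1) * (((0 : ℕ) : ℝ) + 1)⌉ = 1 := by
        rw [Int.ceil_eq_iff]
        constructor
        · push_cast; linarith
        · push_cast; linarith
      have h0 : ⌈(x - (b : ℝ) + 1) * ((0 : ℕ) : ℝ)⌉ = 0 := by
        norm_num
      rw [h1, h0]
      ring
    · have hn1 : 1 ≤ n := hn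
      filter_upwards [key n hn1, key (n + 1) (by omega), hIooL] with x h1 h2 hx
      rw [hword x hx n, upperSCWord, if_neg (by omega)]
      have h2' : ⌈(x - (b : ℝ) + 1) * ((n : ℝ) + 1)⌉ = ⌊(((n : ℚ) + 1) * p) / q⌋ + 1 := by
        have e1 : (((n + 1 : ℕ) : ℝ)) = (n : ℝ) + 1 := by push_cast; ring
        have e2 : (((n + 1 : ℕ) : ℚ)) = (n : ℚ) + 1 := by push_cast; ring
        rw [e1, e2] at h2
        exact h2
      rw [h1, h2']
      ring
  -- dominated convergence
  have hbound_sum : Summable (fun n : ℕ => (b : ℝ) * γ⁻¹ ^ (n + 1)) := by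
    have hg : Summable (fun n : ℕ => ((b : ℝ) * γ⁻¹) * γ⁻¹ ^ n) :=
      (summable_geometric_of_lt_one (by positivity) (inv_lt_one_of_one_lt₀ hγ1)).mul_left _
    apply Summable.congr hg
    intro n
    rw [pow_succ]
    ring
  have hlim : Tendsto (fun x => ∑' n : ℕ, (upperWord x n : ℝ) / (Δ x) ^ (n + 1)) L
      (𝓝 (∑' n : ℕ, (upperSCWord b p q n : ℝ) / βp ^ (n + 1))) := by
    apply tendsto_tsum_of_dominated_convergence hbound_sum
    · intro k
      have hconst : Tendsto (fun x => ((upperSCWord b p q k : ℝ)) / (Δ x) ^ (k + 1)) L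
          (𝓝 ((upperSCWord b p q k : ℝ) / βp ^ (k + 1))) :=
        tendsto_const_nhds.div (hβp.pow _) (pow_ne_zero _ (ne_of_gt hβp0))
      apply hconst.congr'
      filter_upwards [hdig k] with x hx
      rw [hx]
    · filter_upwards [hIooL] with x hx
      intro k
      have hγx := hγΔ x hx
      have hβx : 0 < Δ x := lt_of_lt_of_le hγ0 hγx
      have habs : |(upperWord x k : ℝ)| ≤ (b : ℝ) := by
        rw [abs_of_nonneg (by exact_mod_cast (hdig_bds x hx k).1)]
        exact_mod_cast (hdig_bds x hx k).2
      rw [Real.norm_eq_abs, abs_div, abs_of_nonneg (pow_nonneg hβx.le _)]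
      calc |(upperWord x k : ℝ)| / (Δ x) ^ (k + 1) ≤ (b : ℝ) / (Δ x) ^ (k + 1) := by
            gcongr
        _ ≤ (b : ℝ) / γ ^ (k + 1) := by
            gcongr
        _ = (b : ℝ) * γ⁻¹ ^ (k + 1) := by
            rw [div_eq_mul_inv, inv_pow]
  have hone : (fun x => ∑' n : ℕ, (upperWord x n : ℝ) / (Δ x) ^ (n + 1)) =ᶠ[L]
      (fun _ => (1 : ℝ)) := by
    filter_upwards [hIooL] with x hx
    exact ((hmain x (lt_trans hA0 hx.1)).1).2
  have hlim1 : Tendsto (fun _ : ℝ => (1 : ℝ)) L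
      (𝓝 (∑' n : ℕ, (upperSCWord b p q n : ℝ) / βp ^ (n + 1))) := hlim.congr' hone
  exact tendsto_nhds_unique hlim1 tendsto_const_nhds
end
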